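/- arXiv:1505.00734 — 6 statements merged into one kernel-verified Lean document; each statement's English description precedes it below -/
import Mathlib

section
/- Let P be a path of length ℓ with edge set E, let α ≥ 1/ℓ be a real number, and let B ⊆ E be a set of edges with |B| ≤ αℓ. Let Q be the graph obtained from P by deleting all edges in B. Then there exist pairwise vertex-disjoint subpaths {Q^j}_{j∈J} of Q such that each Q^j has length at least 1/(3α) and the subpaths {Q^j}_{j∈J} together cover at least (1/3 − α)·ℓ vertices of P. -/
/-- `DisjointPathsCover G ℓ m` : `G` contains a collection of pairwise vertex-disjoint
paths, each of length at least `ℓ`, whose union covers at least `m` vertices. -/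
def DisjointPathsCover {V : Type*} (G : SimpleGraph V) (ℓ m : ℝ) : Prop :=
  ∃ (k : ℕ) (a b : Fin k → V) (P : ∀ i, G.Walk (a i) (b i)),
    (∀ i, (P i).IsPath) ∧
    (∀ i, ℓ ≤ ((P i).length : ℝ)) ∧
    (∀ i j, i ≠ j → ∀ x, x ∈ (P i).support → x ∉ (P j).support) ∧
    m ≤ (∑ i, ((P i).support.length : ℝ))

/-- The graph consisting of the edges of the path `P` with the edges in `B` deleted. -/
def pathMinus {V : Type*} {G : SimpleGraph V} {u v : V} (P : G.Walk u v)
    (B : Finset (Sym2 V)) : SimpleGraph V where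
  Adj x y := s(x, y) ∈ P.edges ∧ s(x, y) ∉ B
  symm := ⟨fun x y ⟨h1, h2⟩ => ⟨by rwa [Sym2.eq_swap], by rwa [Sym2.eq_swap]⟩⟩
  loopless := ⟨fun x ⟨h, _⟩ => (G.ne_of_adj (P.adj_of_mem_edges h)) rfl⟩

open SimpleGraph in
private lemma pathMinus_cons_le {V : Type*} {G : SimpleGraph V} {u w v : V} (h : G.Adj u w)
    (P : G.Walk w v) (B : Finset (Sym2 V)) :
    pathMinus P B ≤ pathMinus (Walk.cons h P) B := by
  intro x y hxy
  exact ⟨by rw [Walk.edges_cons]; exact List.mem_cons_of_mem _ hxy.1, hxy.2⟩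

open SimpleGraph in
private lemma support_mapLe' {V : Type*} {G H : SimpleGraph V} (h : G ≤ H) {u v : V}
    (p : G.Walk u v) : (p.mapLe h).support = p.support := by
  rw [Walk.mapLe, Walk.support_map]
  exact (List.map_congr_left (fun x _ => rfl)).trans (List.map_id _)

open SimpleGraph in
private lemma length_mapLe' {V : Type*} {G H : SimpleGraph V} (h : G ≤ H) {u v : V}
    (p : G.Walk u v) : (p.mapLe h).length = p.length := by
  rw [Walk.mapLe, Walk.length_map]

private lemma sum_map_filter_add {α : Type*} (p : α → Bool) (f : α → ℝ) (l : List α) :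
    ((l.filter p).map f).sum + ((l.filter (fun a => !p a)).map f).sum = (l.map f).sum := by
  induction l with
  | nil => simp
  | cons a l ih =>
    by_cases h : p a <;> simp [List.filter_cons, h, ← ih] <;> ring

open SimpleGraph Classical in
/-- The segments of a path after removing the edges in `B`. -/
private lemma segs {V : Type*} {G : SimpleGraph V} {u v : V} (P : G.Walk u v)
    (hP : P.IsPath) (B : Finset (Sym2 V)) :
    ∃ L : List (Σ x : V, Σ y : V, (pathMinus P B).Walk x y),
      (∀ p ∈ L, p.2.2.IsPath) ∧
      L.Pairwise (fun p q => ∀ x, x ∈ p.2.2.support → x ∉ q.2.2.support) ∧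
      (∀ p ∈ L, ∀ x ∈ p.2.2.support, x ∈ P.support) ∧
      (∃ p M, L = p :: M ∧ p.1 = u) ∧
      ((L.map fun p => p.2.2.support.length).sum = P.length + 1) ∧
      L.length ≤ (P.edges.filter (fun e => decide (e ∈ B))).length + 1 := by
  induction P with
  | nil =>
    refine ⟨[⟨_, _, Walk.nil⟩], ?_, ?_, ?_, ⟨_, [], rfl, rfl⟩, ?_, ?_⟩ <;>
      simp [Walk.IsPath.nil]
  | @cons u w v h q ih =>
    rw [Walk.cons_isPath_iff] at hP
    obtain ⟨hq, hu⟩ := hP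
    obtain ⟨L', hpath', hpw', hsub', ⟨p0, M, rfl, hstart⟩, hsum', hlen'⟩ := ih hq
    have le := pathMinus_cons_le h q B
    set T : (Σ x : V, Σ y : V, (pathMinus q B).Walk x y) →
        (Σ x : V, Σ y : V, (pathMinus (Walk.cons h q) B).Walk x y) :=
      fun r => ⟨r.1, r.2.1, r.2.2.mapLe le⟩ with hT
    have hTsupp : ∀ r, (T r).2.2.support = r.2.2.support := fun r => support_mapLe' le _
    by_cases hB : s(u, w) ∈ B
    · -- the first edge is deleted : `u` becomes an isolated segment
      refine ⟨⟨u, u, Walk.nil⟩ :: (p0 :: M).map T, ?_, ?_, ?_, ⟨_, _, rfl, rfl⟩, ?_, ?_⟩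
      · rintro p hp
        rcases List.mem_cons.mp hp with rfl | hp
        · exact Walk.IsPath.nil
        · obtain ⟨r, hr, rfl⟩ := List.mem_map.mp hp
          exact (hpath' r hr).mapLe le
      · refine List.pairwise_cons.mpr ⟨?_, List.Pairwise.map T ?_ hpw'⟩
        · rintro p hp x hx
          obtain ⟨r, hr, rfl⟩ := List.mem_map.mp hp
          rw [hTsupp]
          simp only [Walk.support_nil, List.mem_singleton] at hx
          subst hx
          exact fun hc => hu (hsub' r hr x hc)
        · intro p q hpq x hx
          rw [hTsupp] at hx ⊢
          exact hpq x hx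
      · rintro p hp x hx
        rcases List.mem_cons.mp hp with rfl | hp
        · simp only [Walk.support_nil, List.mem_singleton] at hx
          subst hx; exact Walk.start_mem_support _
        · obtain ⟨r, hr, rfl⟩ := List.mem_map.mp hp
          rw [hTsupp] at hx
          rw [Walk.support_cons]
          exact List.mem_cons_of_mem _ (hsub' r hr x hx)
      · have hmm : ((p0 :: M).map T).map (fun p => p.2.2.support.length) =
            (p0 :: M).map (fun p => p.2.2.support.length) := by
          rw [List.map_map]
          exact List.map_congr_left (fun r _ => by rw [Function.comp_apply, hTsupp])
        rw [List.map_cons, List.sum_cons, hmm, hsum']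
        simp only [Walk.support_nil, List.length_cons, List.length_nil, Walk.length_cons]
        omega
      · have : (Walk.cons h q).edges.filter (fun e => decide (e ∈ B)) =
            s(u, w) :: q.edges.filter (fun e => decide (e ∈ B)) := by
          rw [Walk.edges_cons, List.filter_cons_of_pos (by simpa using hB)]
        rw [this]
        simp only [List.length_cons, List.length_map] at *
        omega
    · -- the first edge survives : extend the first segment
      obtain ⟨x0, y0, r⟩ := p0
      simp only at hstart
      subst hstart
      have hadj : (pathMinus (Walk.cons h q) B).Adj u x0 :=
        ⟨by rw [Walk.edges_cons]; exact List.mem_cons_self, hB⟩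
      have hrsupp : ∀ z ∈ r.support, z ∈ q.support := fun z hz =>
        hsub' ⟨x0, y0, r⟩ (List.mem_cons_self) z hz
      have hur : u ∉ (r.mapLe le).support := by
        rw [support_mapLe']; exact fun hc => hu (hrsupp u hc)
      have hpw0 : ∀ m ∈ M, ∀ z ∈ r.support, z ∉ m.2.2.support := by
        have := List.pairwise_cons.mp hpw'
        exact fun m hm z hz => this.1 m hm z hz
      refine ⟨⟨u, y0, Walk.cons hadj (r.mapLe le)⟩ :: M.map T, ?_, ?_, ?_,
        ⟨_, _, rfl, rfl⟩, ?_, ?_⟩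
      · rintro p hp
        rcases List.mem_cons.mp hp with rfl | hp
        · exact Walk.cons_isPath_iff _ _ |>.mpr
            ⟨(hpath' ⟨x0, y0, r⟩ (List.mem_cons_self)).mapLe le, hur⟩
        · obtain ⟨m, hm, rfl⟩ := List.mem_map.mp hp
          exact (hpath' m (List.mem_cons_of_mem _ hm)).mapLe le
      · refine List.pairwise_cons.mpr ⟨?_, List.Pairwise.map T ?_
          ((List.pairwise_cons.mp hpw').2)⟩
        · rintro p hp z hz
          obtain ⟨m, hm, rfl⟩ := List.mem_map.mp hp
          rw [hTsupp]
          rw [Walk.support_cons, support_mapLe'] at hz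
          rcases List.mem_cons.mp hz with rfl | hz
          · exact fun hc => hu (hsub' m (List.mem_cons_of_mem _ hm) z hc)
          · exact hpw0 m hm z hz
        · intro p q hpq z hz
          rw [hTsupp] at hz ⊢
          exact hpq z hz
      · rintro p hp z hz
        rcases List.mem_cons.mp hp with rfl | hp
        · rw [Walk.support_cons, support_mapLe'] at hz
          rw [Walk.support_cons]
          rcases List.mem_cons.mp hz with rfl | hz
          · exact List.mem_cons_self
          · exact List.mem_cons_of_mem _ (hrsupp z hz)
        · obtain ⟨m, hm, rfl⟩ := List.mem_map.mp hp
          rw [hTsupp] at hz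
          rw [Walk.support_cons]
          exact List.mem_cons_of_mem _ (hsub' m (List.mem_cons_of_mem _ hm) z hz)
      · have hmap : (M.map T).map (fun p => p.2.2.support.length) =
            M.map (fun p => p.2.2.support.length) := by
          rw [List.map_map]
          exact List.map_congr_left (fun m _ => by rw [Function.comp_apply, hTsupp])
        simp only [List.map_cons, List.sum_cons, hmap, Walk.support_cons, List.length_cons,
          support_mapLe'] at hsum' ⊢
        rw [Walk.length_cons]
        omega
      · have : (Walk.cons h q).edges.filter (fun e => decide (e ∈ B)) =
            q.edges.filter (fun e => decide (e ∈ B)) := by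
          rw [Walk.edges_cons, List.filter_cons_of_neg (by simpa using hB)]
        rw [this]
        simp only [List.length_cons, List.length_map] at *
        omega

open SimpleGraph Classical in
/-- **Lemma (long subpaths after edge deletion).** -/
theorem disjoint_subpaths_after_edge_deletion {V : Type*} (G : SimpleGraph V)
    (ℓ : ℕ) (α : ℝ) (u v : V) (P : G.Walk u v) (hP : P.IsPath) (hlen : P.length = ℓ)
    (hα : 1 / (ℓ : ℝ) ≤ α) (B : Finset (Sym2 V)) (hBsub : ∀ e ∈ B, e ∈ P.edges)
    (hBcard : (B.card : ℝ) ≤ α * ℓ) :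
    DisjointPathsCover (pathMinus P B) (1 / (3 * α)) ((1 / 3 - α) * ℓ) := by
  classical
  by_cases htriv : (1 / 3 - α) * ℓ ≤ 0
  · exact ⟨0, Fin.elim0, Fin.elim0, fun i => i.elim0, fun i => i.elim0, fun i => i.elim0,
      fun i => i.elim0, by simpa using htriv⟩
  push_neg at htriv
  have hℓ1 : 1 ≤ ℓ := by
    by_contra hc
    interval_cases ℓ <;> simp at htriv <;> linarith
  have hℓpos : (0:ℝ) < ℓ := by exact_mod_cast Nat.lt_of_lt_of_le Nat.zero_lt_one hℓ1
  have hαpos : 0 < α := lt_of_lt_of_le (by positivity) hα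
  have hαℓ : 1 ≤ α * ℓ := by
    rw [div_le_iff₀ hℓpos] at hα
    linarith
  set Lr : ℝ := 1 / (3 * α) with hLr
  obtain ⟨L, hpath, hpw, _, _, hsum, hcard⟩ := segs P hP B
  set f : (Σ x : V, Σ y : V, (pathMinus P B).Walk x y) → ℝ :=
    fun p => (p.2.2.support.length : ℝ) with hf
  set good : (Σ x : V, Σ y : V, (pathMinus P B).Walk x y) → Bool :=
    fun p => decide (Lr ≤ (p.2.2.length : ℝ)) with hgood
  set K := L.filter good with hK
  -- bound the number of edges of `P` in `B`
  have hnB : (P.edges.filter (fun e => decide (e ∈ B))).length ≤ B.card := by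
    have hnd : (P.edges.filter (fun e => decide (e ∈ B))).Nodup :=
      hP.isTrail.edges_nodup.filter _
    have hsub : (P.edges.filter (fun e => decide (e ∈ B))).toFinset ⊆ B := by
      intro e he
      rw [List.mem_toFinset] at he
      have := List.of_mem_filter he
      simpa using this
    calc (P.edges.filter (fun e => decide (e ∈ B))).length
        = (P.edges.filter (fun e => decide (e ∈ B))).toFinset.card :=
          (List.toFinset_card_of_nodup hnd).symm
      _ ≤ B.card := Finset.card_le_card hsub
  -- total sum of support lengths over all segments
  have htot : (L.map f).sum = (ℓ : ℝ) + 1 := by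
    rw [hf]
    rw [show (L.map fun p => ((p.2.2.support.length : ℕ) : ℝ)) =
        (L.map fun p => p.2.2.support.length).map (fun n : ℕ => (n : ℝ)) by
      rw [List.map_map]; rfl]
    rw [← Nat.cast_list_sum, hsum, hlen]
    push_cast; ring
  -- bound the bad sum
  set Bad := L.filter (fun p => !good p) with hBad
  have hbad_le : ((Bad.map f).sum) ≤ (Bad.length : ℝ) * (Lr + 1) := by
    have h1 : ∀ x ∈ Bad.map f, x ≤ Lr + 1 := by
      rintro x hx
      obtain ⟨p, hp, rfl⟩ := List.mem_map.mp hx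
      have := List.of_mem_filter hp
      simp only [hgood, Bool.not_eq_true', decide_eq_false_iff_not, not_le] at this
      have hlen' : (p.2.2.support.length : ℝ) = (p.2.2.length : ℝ) + 1 := by
        rw [Walk.length_support]; push_cast; ring
      rw [hf] at *
      simp only [hlen']
      linarith
    have h2 := List.sum_le_card_nsmul (Bad.map f) (Lr + 1) h1
    rw [List.length_map, nsmul_eq_mul] at h2
    exact h2
  have hbadlen : (Bad.length : ℝ) ≤ α * ℓ + 1 := by
    have h1 : (Bad.length : ℝ) ≤ (L.length : ℝ) := Nat.cast_le.mpr (List.length_filter_le _ _)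
    have h2 : (L.length : ℝ) ≤ (B.card : ℝ) + 1 := by
      exact_mod_cast le_trans hcard (Nat.add_le_add_right hnB 1)
    linarith
  have hLr_le : Lr ≤ (ℓ : ℝ) / 3 := by
    rw [hLr, div_le_iff₀ (by positivity)]
    rw [div_le_iff₀ hℓpos] at hα
    nlinarith
  have hkept : ((1 : ℝ) / 3 - α) * ℓ ≤ (K.map f).sum := by
    have hsplit := sum_map_filter_add good f L
    rw [← hK, ← hBad] at hsplit
    have hbad : (Bad.map f).sum ≤ (α * ℓ + 1) * (Lr + 1) := by
      have hLr1 : (0:ℝ) ≤ Lr + 1 := by positivity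
      calc (Bad.map f).sum ≤ (Bad.length : ℝ) * (Lr + 1) := hbad_le
        _ ≤ (α * ℓ + 1) * (Lr + 1) := by nlinarith
    have hexp : (α * ℓ + 1) * (Lr + 1) = (ℓ:ℝ)/3 + α * ℓ + Lr + 1 := by
      rw [hLr]; field_simp; ring
    nlinarith [htot, hsplit]
  -- assemble the cover
  refine ⟨K.length, fun i => (K.get i).1, fun i => (K.get i).2.1, fun i => (K.get i).2.2,
    ?_, ?_, ?_, ?_⟩
  · exact fun i => hpath _ (List.mem_of_mem_filter (K.get_mem i))
  · intro i
    have := List.of_mem_filter (K.get_mem i)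
    simpa [hgood, hLr] using this
  · intro i j hij x hxi hxj
    have hpwK : K.Pairwise (fun p q => ∀ x, x ∈ p.2.2.support → x ∉ q.2.2.support) :=
      List.Pairwise.sublist (List.filter_sublist) hpw
    rcases lt_or_gt_of_ne hij with hlt | hlt
    · exact (List.pairwise_iff_get.mp hpwK i j hlt) x hxi hxj
    · exact (List.pairwise_iff_get.mp hpwK j i hlt) x hxj hxi
  · have : ∑ i : Fin K.length, f (K.get i) = (K.map f).sum := by
      simpa using Fin.sum_univ_get' K f
    rw [hf] at this
    simp only [List.get_eq_getElem] at *
    rw [this]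
    exact hkept
end

section
/- There exist constants C > 0 and ε₀ > 0 such that for every ε ∈ (0, ε₀), setting ℓ = (C/ε)·ln(1/ε) and t₀ = (15/ε²)·ln(1/ε), one has ∑_{t integer, ℓ ≤ t ≤ t₀} p_{t,ℓ} ≤ ε³. -/
/-- `HasLongPath G ℓ` : `G` contains a path of length at least `ℓ`. -/
def HasLongPath {V : Type*} (G : SimpleGraph V) (ℓ : ℝ) : Prop :=
  ∃ (a b : V) (P : G.Walk a b), P.IsPath ∧ ℓ ≤ (P.length : ℝ)

/-- `pTree t ℓ` : the proportion, among the `t^(t-2)` labeled trees on `{1,…,t}`, of those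
containing a path of length at least `ℓ`. -/
noncomputable def pTree (t : ℕ) (ℓ : ℝ) : ℝ :=
  (Set.ncard {T : SimpleGraph (Fin t) | T.IsTree ∧ HasLongPath T ℓ} : ℝ) / (t : ℝ) ^ (t - 2)


namespace SimpleGraph.Walk

variable {V : Type*} {G : SimpleGraph V}

/-- The walk consisting of the first `n` edges of `p` (all of `p` if `n ≥ length`). -/
def takeW : ∀ {u v : V} (p : G.Walk u v) (n : ℕ), G.Walk u (p.getVert n)
  | _, _, p, 0 => Walk.nil.copy rfl (p.getVert_zero).symm
  | _, _, Walk.nil, _+1 => Walk.nil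
  | _, _, Walk.cons h q, n+1 => Walk.cons h (takeW q n)

lemma length_takeW {u v : V} (p : G.Walk u v) {n : ℕ} (hn : n ≤ p.length) :
    (p.takeW n).length = n := by
  induction p generalizing n with
  | nil => simp at hn; subst hn; rfl
  | cons h q ih =>
    cases n with
    | zero => simp [takeW]
    | succ m => simp only [takeW, length_cons]; exact congrArg (· + 1) (ih (by simpa using hn))

lemma getVert_takeW {u v : V} (p : G.Walk u v) {n i : ℕ} (hi : i ≤ n) :
    (p.takeW n).getVert i = p.getVert i := by
  induction p generalizing n i with
  | nil =>
    cases n with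
    | zero => interval_cases i; simp [takeW]
    | succ m => simp [takeW]
  | cons h q ih =>
    cases n with
    | zero => interval_cases i; simp [takeW]
    | succ m =>
      cases i with
      | zero => simp [takeW]
      | succ j => simp only [takeW, getVert_cons_succ]; exact ih (by omega)

lemma support_takeW_prefix {u v : V} (p : G.Walk u v) (n : ℕ) :
    (p.takeW n).support <+: p.support := by
  induction p generalizing n with
  | nil =>
    cases n with
    | zero => simp [takeW]
    | succ m => simp [takeW]
  | cons h q ih =>
    cases n with
    | zero =>
      simp only [takeW, support_copy, support_nil, support_cons]
      exact ⟨q.support, rfl⟩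
    | succ m =>
      simp only [takeW, support_cons]
      obtain ⟨tl, htl⟩ := ih m
      exact ⟨tl, congrArg (List.cons _) htl⟩

protected lemma IsPath.takeW {u v : V} {p : G.Walk u v} (hp : p.IsPath) (n : ℕ) :
    (p.takeW n).IsPath :=
  IsPath.mk' ((support_takeW_prefix p n).sublist.nodup hp.support_nodup)

lemma getVert_eq_support_getElem' {u v : V} {p : G.Walk u v} {i : ℕ} (hi : i ≤ p.length) :
    p.getVert i = p.support[i]'(by simp [length_support]; omega) := by
  induction p generalizing i with
  | nil => simp at hi; subst hi; simp
  | cons h q ih =>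
    cases i with
    | zero => simp
    | succ j =>
      simp only [support_cons, getVert_cons_succ]
      rw [ih (by simpa using hi)]
      simp

lemma IsPath.getVert_inj {u v : V} {p : G.Walk u v} (hp : p.IsPath) {i j : ℕ}
    (hi : i ≤ p.length) (hj : j ≤ p.length) (h : p.getVert i = p.getVert j) : i = j := by
  rw [getVert_eq_support_getElem' hi, getVert_eq_support_getElem' hj] at h
  have := hp.support_nodup
  exact (List.Nodup.getElem_inj_iff this).mp h

end SimpleGraph.Walk

section TreeParent

open SimpleGraph Walk

variable {V : Type*} {T : SimpleGraph V}

/-- The unique path between two vertices of a tree. -/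
noncomputable def tpath (ht : T.IsTree) (v r : V) : T.Walk v r :=
  (ht.existsUnique_path v r).choose

lemma tpath_isPath (ht : T.IsTree) (v r : V) : (tpath ht v r).IsPath :=
  (ht.existsUnique_path v r).choose_spec.1

lemma tpath_eq (ht : T.IsTree) {v r : V} (p : T.Walk v r) (hp : p.IsPath) :
    p = tpath ht v r :=
  (ht.existsUnique_path v r).choose_spec.2 p hp

/-- The parent of `v` in the tree `T` rooted at `r`. -/
noncomputable def tparent (ht : T.IsTree) (r v : V) : V :=
  (tpath ht v r).getVert 1

lemma tparent_eq_of_isPath (ht : T.IsTree) {v r : V} (p : T.Walk v r) (hp : p.IsPath) :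
    tparent ht r v = p.getVert 1 := by
  rw [tparent, ← tpath_eq ht p hp]

lemma tparent_adj (ht : T.IsTree) {r v : V} (hvr : v ≠ r) :
    T.Adj v (tparent ht r v) :=
  adj_snd (not_nil_of_ne hvr)

lemma tparent_getVert (ht : T.IsTree) {v0 b : V} (Q : T.Walk v0 b) (hQ : Q.IsPath)
    {i : ℕ} (hi : i + 1 ≤ Q.length) :
    tparent ht v0 (Q.getVert (i+1)) = Q.getVert i := by
  have hW : ((Q.takeW (i+1)).reverse).IsPath := (hQ.takeW (i+1)).reverse
  rw [tparent_eq_of_isPath ht _ hW, getVert_reverse, length_takeW Q hi]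
  rw [getVert_takeW Q (by omega : i + 1 - 1 ≤ i + 1)]
  congr 1

lemma adj_iff_tparent (ht : T.IsTree) (r : V) {a b : V} :
    T.Adj a b ↔ ((a ≠ r ∧ tparent ht r a = b) ∨ (b ≠ r ∧ tparent ht r b = a)) := by
  classical
  constructor
  · intro hab
    set p := tpath ht b r with hp_def
    have hp : p.IsPath := tpath_isPath ht b r
    by_cases ha : a ∈ p.support
    · -- b's parent is a
      have hbr : b ≠ r := by
        rintro rfl
        have hnil : (Walk.nil : T.Walk b b) = tpath ht b b := tpath_eq ht _ IsPath.nil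
        rw [hp_def, ← hnil] at ha
        simp only [support_nil, List.mem_singleton] at ha
        subst ha
        exact hab.ne rfl
      have hnd : p.support.Nodup := hp.support_nodup
      have hsup : p.support = (p.takeUntil a ha).support ++ (p.dropUntil a ha).support.tail := by
        conv_lhs => rw [← p.take_spec ha]
        exact support_append _ _
      have hb_not : b ∉ (p.dropUntil a ha).support := by
        intro hb
        rcases List.mem_cons.mp (by rw [← support_eq_cons] ; exact hb :
            b ∈ a :: (p.dropUntil a ha).support.tail) with h1 | h1
        · exact hab.ne h1.symm
        · have hbtake : b ∈ (p.takeUntil a ha).support := start_mem_support _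
          rw [hsup] at hnd
          exact (List.disjoint_of_nodup_append hnd) hbtake h1
      have hpath : (Walk.cons (T.adj_symm hab) (p.dropUntil a ha)).IsPath :=
        (hp.dropUntil ha).cons hb_not
      right
      refine ⟨hbr, ?_⟩
      rw [tparent_eq_of_isPath ht _ hpath]
      simp [getVert_cons_succ]
    · have hpath : (Walk.cons hab p).IsPath := hp.cons ha
      have har : a ≠ r := by
        rintro rfl
        exact ha (end_mem_support p)
      left
      refine ⟨har, ?_⟩
      rw [tparent_eq_of_isPath ht _ hpath]
      simp [getVert_cons_succ]
  · rintro (⟨h1, h2⟩ | ⟨h1, h2⟩)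
    · exact h2 ▸ tparent_adj ht h1
    · exact (h2 ▸ tparent_adj ht h1).symm

end TreeParent


lemma Finset.orderIsoOfFin_congr' {α : Type*} [LinearOrder α] {s s' : Finset α} (h : s = s')
    {k : ℕ} (hs : s.card = k) (hs' : s'.card = k) (j : Fin k) :
    (s.orderIsoOfFin hs j : α) = (s'.orderIsoOfFin hs' j : α) := by
  subst h; rfl

lemma tree_count (t : ℕ) (ℓ : ℝ) :
    {T : SimpleGraph (Fin t) | T.IsTree ∧ HasLongPath T ℓ}.ncard ≤
      t.descFactorial (⌈ℓ⌉₊ + 1) * t ^ (t - (⌈ℓ⌉₊ + 1)) := by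
  classical
  set L := ⌈ℓ⌉₊ with hLdef
  set S := {T : SimpleGraph (Fin t) | T.IsTree ∧ HasLongPath T ℓ} with hS
  have key : ∀ x : S, ∃ (a b : Fin t) (Q : (x : SimpleGraph (Fin t)).Walk a b),
      Q.IsPath ∧ L ≤ Q.length := by
    rintro ⟨T, hT, hlp⟩
    obtain ⟨a, b, P, hP, hlen⟩ := hlp
    exact ⟨a, b, P, hP, Nat.ceil_le.mpr (by exact_mod_cast hlen)⟩
  choose av bv Q hQ hLen using key
  have hinj : ∀ x : S, Function.Injective (fun i : Fin (L+1) => (Q x).getVert i) := by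
    intro x i j hij
    exact Fin.ext ((hQ x).getVert_inj
      (le_trans (Nat.lt_succ_iff.mp i.isLt) (hLen x))
      (le_trans (Nat.lt_succ_iff.mp j.isLt) (hLen x)) hij)
  set e : S → (Fin (L+1) ↪ Fin t) := fun x => ⟨fun i => (Q x).getVert i, hinj x⟩ with he_def
  set F : S → Finset (Fin t) := fun x => Finset.univ.map (e x) with hF_def
  have hcard : ∀ x : S, (F x)ᶜ.card = t - (L+1) := by
    intro x
    rw [hF_def]
    simp [Finset.card_compl]
  set g : S → (Fin (t-(L+1)) → Fin t) :=
    fun x j => tparent x.2.1 (av x) ((((F x)ᶜ).orderIsoOfFin (hcard x)) j) with hg_def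
  have henc : Function.Injective (fun x : S => (e x, g x)) := by
    intro x y hxy
    rw [Prod.mk.injEq] at hxy
    obtain ⟨hee, hgg⟩ := hxy
    have heei : ∀ i : Fin (L+1), (Q x).getVert i = (Q y).getVert i := by
      intro i
      have := congrFun (congrArg (fun (f : Fin (L+1) ↪ Fin t) => (f : Fin (L+1) → Fin t)) hee) i
      simpa [he_def] using this
    have hr : av x = av y := by
      have := heei ⟨0, by omega⟩
      simpa using this
    have hFxy : F x = F y := by rw [hF_def]; simp only [hee]
    have hpar : ∀ v : Fin t, v ≠ av x →
        tparent x.2.1 (av x) v = tparent y.2.1 (av x) v := by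
      intro v hv
      by_cases hmem : v ∈ F x
      · rw [hF_def] at hmem
        obtain ⟨i, _, hi⟩ := Finset.mem_map.mp hmem
        have hix : (Q x).getVert i = v := hi
        obtain ⟨k, hk⟩ : ∃ k, (i : ℕ) = k + 1 := by
          refine Nat.exists_eq_succ_of_ne_zero ?_
          intro h0
          apply hv
          rw [← hix, h0]
          simp
        have hkL : k + 1 ≤ L := by have := Nat.lt_succ_iff.mp i.isLt; omega
        have hx1 : (Q x).getVert (k+1) = v := by rw [← hk]; exact hix
        have hy1 : (Q y).getVert (k+1) = v := by
          rw [← hx1]; rw [← hk]; exact (heei i).symm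
        calc tparent x.2.1 (av x) v
            = (Q x).getVert k := by
              rw [← hx1]; exact tparent_getVert x.2.1 (Q x) (hQ x) (le_trans hkL (hLen x))
          _ = (Q y).getVert k := heei ⟨k, by omega⟩
          _ = tparent y.2.1 (av y) ((Q y).getVert (k+1)) :=
              (tparent_getVert y.2.1 (Q y) (hQ y) (le_trans hkL (hLen y))).symm
          _ = tparent y.2.1 (av x) v := by rw [hy1, hr]
      · have hv' : v ∈ (F x)ᶜ := Finset.mem_compl.mpr hmem
        set j := (((F x)ᶜ).orderIsoOfFin (hcard x)).symm ⟨v, hv'⟩ with hj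
        have hjv : ((((F x)ᶜ).orderIsoOfFin (hcard x)) j : Fin t) = v := by
          rw [hj]; simp
        have hcoe : ((((F y)ᶜ).orderIsoOfFin (hcard y)) j : Fin t) = v := by
          rw [Finset.orderIsoOfFin_congr' (by rw [hFxy] : (F y)ᶜ = (F x)ᶜ) (hcard y) (hcard x) j]
          exact hjv
        calc tparent x.2.1 (av x) v
            = g x j := by rw [hg_def]; simp only; rw [hjv]
          _ = g y j := by rw [hgg]
          _ = tparent y.2.1 (av x) v := by rw [hg_def]; simp only; rw [hcoe, ← hr]
    apply Subtype.ext
    ext a c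
    rw [adj_iff_tparent x.2.1 (av x), adj_iff_tparent y.2.1 (av x)]
    constructor
    · rintro (⟨h1, h2⟩ | ⟨h1, h2⟩)
      · exact Or.inl ⟨h1, by rw [← hpar a h1]; exact h2⟩
      · exact Or.inr ⟨h1, by rw [← hpar c h1]; exact h2⟩
    · rintro (⟨h1, h2⟩ | ⟨h1, h2⟩)
      · exact Or.inl ⟨h1, by rw [hpar a h1]; exact h2⟩
      · exact Or.inr ⟨h1, by rw [hpar c h1]; exact h2⟩
  calc S.ncard = Nat.card S := (Nat.card_coe_set_eq S).symm
    _ ≤ Nat.card ((Fin (L+1) ↪ Fin t) × (Fin (t-(L+1)) → Fin t)) :=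
        Nat.card_le_card_of_injective _ henc
    _ = t.descFactorial (L+1) * t ^ (t-(L+1)) := by
        simp [Nat.card_eq_fintype_card, Fintype.card_embedding_eq, Fintype.card_fun]

lemma term_bound (t L : ℕ) (ht : 2 ≤ t) :
    ((t.descFactorial (L+1) * t ^ (t - (L+1)) : ℕ) : ℝ) / (t:ℝ) ^ (t - 2) ≤
      (t:ℝ)^2 * Real.exp (-(L:ℝ)^2 / (2*(t:ℝ))) := by
  have htR : (0:ℝ) < t := by exact_mod_cast (by omega : 0 < t)
  by_cases hLt : L + 1 ≤ t
  · set E := Real.exp (-(L:ℝ)^2 / (2*(t:ℝ))) with hE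
    have hEpos : 0 < E := Real.exp_pos _
    -- descFactorial bound
    have hcast : (t.descFactorial (L+1) : ℝ) = ∏ i ∈ Finset.range (L+1), ((t:ℝ) - i) := by
      rw [Nat.descFactorial_eq_prod_range]
      push_cast [Nat.cast_prod]
      refine Finset.prod_congr rfl ?_
      intro i hi
      have : i ≤ t := by have := Finset.mem_range.mp hi; omega
      push_cast [Nat.cast_sub this]
      ring
    have h1 : (t.descFactorial (L+1) : ℝ) ≤ (t:ℝ)^(L+1) * E := by
      rw [hcast]
      have hstep : ∀ i ∈ Finset.range (L+1), (t:ℝ) - i ≤ (t:ℝ) * Real.exp (-((i:ℝ)/t)) := by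
        intro i _
        have h2 : 1 - (i:ℝ)/t ≤ Real.exp (-((i:ℝ)/t)) := by
          have := Real.add_one_le_exp (-((i:ℝ)/t))
          linarith
        calc (t:ℝ) - i = (t:ℝ) * (1 - (i:ℝ)/t) := by field_simp
          _ ≤ (t:ℝ) * Real.exp (-((i:ℝ)/t)) := by
              exact mul_le_mul_of_nonneg_left h2 htR.le
      calc ∏ i ∈ Finset.range (L+1), ((t:ℝ) - i)
          ≤ ∏ i ∈ Finset.range (L+1), ((t:ℝ) * Real.exp (-((i:ℝ)/t))) := by
            refine Finset.prod_le_prod ?_ hstep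
            intro i hi
            have : (i:ℝ) ≤ t := by
              have := Finset.mem_range.mp hi
              exact_mod_cast (by omega : i ≤ t)
            linarith
        _ = (t:ℝ)^(L+1) * Real.exp (∑ i ∈ Finset.range (L+1), (-((i:ℝ)/t))) := by
            rw [Finset.prod_mul_distrib, Finset.prod_const, Finset.card_range, Real.exp_sum]
        _ ≤ (t:ℝ)^(L+1) * E := by
            refine mul_le_mul_of_nonneg_left ?_ (by positivity)
            rw [hE]
            apply Real.exp_le_exp.mpr
            have hsum : ∑ i ∈ Finset.range (L+1), (-((i:ℝ)/t)) =
                -(∑ i ∈ Finset.range (L+1), (i:ℝ)) / t := by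
              simp only [neg_div, Finset.sum_neg_distrib, Finset.sum_div]
            have hgauss : (∑ i ∈ Finset.range (L+1), (i:ℝ)) = (L:ℝ) * (L+1) / 2 := by
              have h2 := Finset.sum_range_id_mul_two (L+1)
              have : ((∑ i ∈ Finset.range (L+1), i) * 2 : ℕ) = ((L+1) * L : ℕ) := by
                rw [h2]; simp
              have h3 : ((∑ i ∈ Finset.range (L+1), i : ℕ) : ℝ) * 2 = ((L:ℝ)+1) * L := by
                exact_mod_cast congrArg (Nat.cast : ℕ → ℝ) this
              push_cast at h3 ⊢
              linarith
            rw [hsum, hgauss]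
            rw [div_le_div_iff₀ (by positivity) (by positivity)]
            nlinarith [sq_nonneg (L:ℝ), htR, (by positivity : (0:ℝ) ≤ (L:ℝ))]
    -- combine
    rw [div_le_iff₀ (by positivity)]
    push_cast
    have hpow : (t:ℝ)^(L+1) * (t:ℝ)^(t-(L+1)) = (t:ℝ)^2 * (t:ℝ)^(t-2) := by
      rw [← pow_add, ← pow_add]
      congr 1
      omega
    calc (t.descFactorial (L+1) : ℝ) * (t:ℝ)^(t-(L+1))
        ≤ ((t:ℝ)^(L+1) * E) * (t:ℝ)^(t-(L+1)) := by
          exact mul_le_mul_of_nonneg_right h1 (by positivity)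
      _ = ((t:ℝ)^(L+1) * (t:ℝ)^(t-(L+1))) * E := by ring
      _ = ((t:ℝ)^2 * (t:ℝ)^(t-2)) * E := by rw [hpow]
      _ = (t:ℝ)^2 * E * (t:ℝ)^(t-2) := by ring
  · have : t.descFactorial (L+1) = 0 := by
      rw [Nat.descFactorial_eq_zero_iff_lt]
      omega
    rw [this]
    simp only [Nat.zero_mul, Nat.cast_zero, zero_div]
    positivity

lemma pTree_le (t : ℕ) (ℓ : ℝ) (ht : 2 ≤ t) :
    pTree t ℓ ≤ (t:ℝ)^2 * Real.exp (-((⌈ℓ⌉₊:ℝ))^2 / (2*(t:ℝ))) := by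
  refine le_trans ?_ (term_bound t ⌈ℓ⌉₊ ht)
  unfold pTree
  gcongr
  exact_mod_cast tree_count t ℓ

set_option maxHeartbeats 2000000 in
/-- **Lemma (sum of tree-path proportions is small).** There exist constants `C, ε₀ > 0`
such that for every `ε ∈ (0, ε₀)`, with `ℓ = (C/ε)·ln(1/ε)` and `t₀ = (15/ε²)·ln(1/ε)`,
the sum of `p_{t,ℓ}` over all integers `t` with `ℓ ≤ t ≤ t₀` is at most `ε³`. -/
theorem sum_pTree_le :
    ∃ C > (0 : ℝ), ∃ ε₀ > (0 : ℝ), ∀ ε : ℝ, 0 < ε → ε < ε₀ →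
      ∑ t ∈ Finset.Icc ⌈(C / ε) * Real.log (1 / ε)⌉₊ ⌊(15 / ε ^ 2) * Real.log (1 / ε)⌋₊,
          pTree t ((C / ε) * Real.log (1 / ε)) ≤ ε ^ 3 := by
  refine ⟨30, by norm_num, 1/2, by norm_num, ?_⟩
  intro ε hε hε2
  have hε1 : ε < 1 := lt_trans hε2 (by norm_num)
  set x := Real.log (1 / ε) with hxdef
  have hx0 : 0 < x := Real.log_pos (one_lt_one_div hε hε1)
  set ℓ := (30 / ε) * x with hℓdef
  set L := ⌈ℓ⌉₊ with hLdef
  set t₀ := (15 / ε ^ 2) * x with ht₀def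
  have hℓpos : 0 < ℓ := by positivity
  have ht₀pos : 0 < t₀ := by positivity
  have hxle : x ≤ 1/ε := by
    rw [hxdef]
    have := Real.log_le_sub_one_of_pos (by positivity : (0:ℝ) < 1/ε)
    linarith
  -- log 2 ≥ 1/2
  have hxge : (1:ℝ)/2 ≤ x := by
    have h2 : (2:ℝ) ≤ 1/ε := by
      rw [le_div_iff₀ hε]
      linarith
    calc (1:ℝ)/2 ≤ Real.log 2 := by
          have := Real.log_two_gt_d9
          linarith
      _ ≤ x := Real.log_le_log (by norm_num) h2
  have hℓ2 : (2:ℝ) ≤ ℓ := by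
    have h1 : (30:ℝ)/ε ≥ 30 := by
      rw [ge_iff_le, le_div_iff₀ hε]
      nlinarith
    calc (2:ℝ) ≤ 30 * (1/2) := by norm_num
      _ ≤ (30/ε) * x := by
          apply mul_le_mul h1 ?_ (by norm_num) (by positivity)
          exact hxge
      _ = ℓ := rfl
  have hL2 : 2 ≤ L := by
    have : (2:ℝ) ≤ (L:ℝ) := le_trans hℓ2 (Nat.le_ceil ℓ)
    exact_mod_cast this
  have hLℓ : ℓ ≤ (L:ℝ) := Nat.le_ceil ℓ
  -- the uniform bound for each term
  set B := t₀^2 * ε^30 with hBdef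
  have hexp : Real.exp (-(30*x)) = ε^30 := by
    have h30 : -(30*x) = Real.log (ε^30) := by
      rw [Real.log_pow, hxdef, one_div, Real.log_inv]
      push_cast
      ring
    rw [h30, Real.exp_log (by positivity)]
  have hterm : ∀ t ∈ Finset.Icc L ⌊t₀⌋₊, pTree t ℓ ≤ B := by
    intro t htmem
    obtain ⟨hLt, htub⟩ := Finset.mem_Icc.mp htmem
    have ht2 : 2 ≤ t := le_trans hL2 hLt
    have htpos : (0:ℝ) < t := by exact_mod_cast (by omega : 0 < t)
    have htt₀ : (t:ℝ) ≤ t₀ :=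
      le_trans (Nat.cast_le.mpr htub) (Nat.floor_le ht₀pos.le)
    refine le_trans (pTree_le t ℓ ht2) ?_
    rw [hBdef, ← hexp]
    have hLcast : (⌈ℓ⌉₊ : ℝ) = (L:ℝ) := by rw [hLdef]
    rw [hLcast]
    have hkey : 30*x ≤ (L:ℝ)^2 / (2*(t:ℝ)) := by
      have heq : ℓ^2 / (2*t₀) = 30*x := by
        rw [hℓdef, ht₀def]
        field_simp
        ring
      rw [← heq]
      apply div_le_div₀ (by positivity) (by nlinarith) (by positivity) (by linarith)
    have h1 : Real.exp (-(L:ℝ)^2 / (2*(t:ℝ))) ≤ Real.exp (-(30*x)) := by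
      apply Real.exp_le_exp.mpr
      rw [neg_div]
      linarith
    calc (t:ℝ)^2 * Real.exp (-(L:ℝ)^2 / (2*(t:ℝ)))
        ≤ t₀^2 * Real.exp (-(30*x)) := by
          apply mul_le_mul (by nlinarith) h1 (Real.exp_pos _).le (by positivity)
      _ = t₀^2 * Real.exp (-(30*x)) := rfl
  -- sum bound
  have hsum : ∑ t ∈ Finset.Icc L ⌊t₀⌋₊, pTree t ℓ ≤ ((⌊t₀⌋₊ + 1 : ℕ) : ℝ) * B := by
    have hcard : (Finset.Icc L ⌊t₀⌋₊).card ≤ ⌊t₀⌋₊ + 1 := by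
      rw [Nat.card_Icc]
      omega
    calc ∑ t ∈ Finset.Icc L ⌊t₀⌋₊, pTree t ℓ
        ≤ (Finset.Icc L ⌊t₀⌋₊).card • B := Finset.sum_le_card_nsmul _ _ _ hterm
      _ = ((Finset.Icc L ⌊t₀⌋₊).card : ℝ) * B := by rw [nsmul_eq_mul]
      _ ≤ ((⌊t₀⌋₊ + 1 : ℕ) : ℝ) * B := by
          apply mul_le_mul_of_nonneg_right ?_ (by positivity)
          exact_mod_cast hcard
  refine le_trans hsum ?_
  have ht₀le : t₀ ≤ 15/ε^3 := by
    rw [ht₀def]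
    calc (15/ε^2) * x ≤ (15/ε^2) * (1/ε) := by
          apply mul_le_mul_of_nonneg_left hxle (by positivity)
      _ = 15/ε^3 := by field_simp
  have hfl : ((⌊t₀⌋₊ + 1 : ℕ) : ℝ) ≤ 16/ε^3 := by
    push_cast
    have h1 : (⌊t₀⌋₊ : ℝ) ≤ t₀ := Nat.floor_le ht₀pos.le
    have h2 : (1:ℝ) ≤ 1/ε^3 := by
      rw [le_one_div (by norm_num) (by positivity)]
      nlinarith
    calc (⌊t₀⌋₊ : ℝ) + 1 ≤ t₀ + 1 := by linarith
      _ ≤ 15/ε^3 + 1/ε^3 := by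
          have : (1:ℝ) ≤ 1/ε^3 := h2
          linarith [ht₀le]
      _ = 16/ε^3 := by ring
  have hBle : B ≤ (15/ε^3)^2 * ε^30 := by
    rw [hBdef]
    apply mul_le_mul_of_nonneg_right ?_ (by positivity)
    exact pow_le_pow_left₀ ht₀pos.le ht₀le 2
  calc ((⌊t₀⌋₊ + 1 : ℕ) : ℝ) * B ≤ (16/ε^3) * ((15/ε^3)^2 * ε^30) := by
        apply mul_le_mul hfl hBle (by positivity) (by positivity)
    _ = 3600 * ε^21 := by field_simp; ring
    _ ≤ ε^3 := by
        have h18 : ε^18 ≤ (1/2)^18 := pow_le_pow_left₀ hε.le hε2.le 18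
        have : 3600 * ε^21 = (3600 * ε^18) * ε^3 := by ring
        rw [this]
        have h36 : 3600 * ε^18 ≤ 1 := by
          calc 3600 * ε^18 ≤ 3600 * (1/2)^18 := by linarith
            _ ≤ 1 := by norm_num
        nlinarith [pow_pos hε 3]
end

section
/- There exist constants C > 0 and ε₀ > 0 such that for every ε ∈ (0, ε₀) the following holds. Let μ ∈ (0,1) satisfy μ·e^{−μ} = (1+ε)·e^{−(1+ε)} and set ℓ = (C/ε)·ln(1/ε). Then ∑_{t ≥ 1} ( t^{t−1}·(μe^{−μ})^t / (μ·t!) ) · t · p_{t, ℓ/3} ≤ 14ε³. -/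
set_option linter.unusedSectionVars false
set_option linter.unusedVariables false

namespace GWAux

open SimpleGraph

variable {V : Type*} [DecidableEq V] {G : SimpleGraph V}

/-- the unique path between two vertices of a tree -/
noncomputable def upath (hG : G.IsTree) (u v : V) : G.Walk u v :=
  (hG.existsUnique_path u v).choose

lemma upath_isPath (hG : G.IsTree) (u v : V) : (upath hG u v).IsPath :=
  (hG.existsUnique_path u v).choose_spec.1

lemma upath_eq (hG : G.IsTree) {u v : V} {p : G.Walk u v} (hp : p.IsPath) :
    p = upath hG u v :=
  (hG.existsUnique_path u v).choose_spec.2 p hp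

/-- the parent of `v` in the tree rooted at `r` -/
noncomputable def par (hG : G.IsTree) (r v : V) : V :=
  (upath hG r v).getVert ((upath hG r v).length - 1)

lemma par_self (hG : G.IsTree) (r : V) : par hG r r = r := by
  have h : (Walk.nil : G.Walk r r) = upath hG r r := upath_eq hG Walk.IsPath.nil
  rw [par, ← h]
  rfl

lemma adj_par (hG : G.IsTree) {r v : V} (hv : v ≠ r) : G.Adj (par hG r v) v := by
  rw [par]
  set p := upath hG r v with hp
  have hl : p.length ≠ 0 := fun h => hv (Walk.eq_of_length_eq_zero h).symm
  have h1 : p.length - 1 < p.length := Nat.sub_lt (Nat.pos_of_ne_zero hl) one_pos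
  have h2 := p.adj_getVert_succ h1
  rwa [Nat.sub_add_cancel (Nat.one_le_iff_ne_zero.2 hl), Walk.getVert_length] at h2

lemma edge_par (hG : G.IsTree) (r : V) {u v : V} (h : G.Adj u v) :
    par hG r u = v ∨ par hG r v = u := by
  by_cases hv : v ∈ (upath hG r u).support
  · left
    set p := upath hG r u with hpdef
    have hq : (p.dropUntil v hv).IsPath := (upath_isPath hG r u).dropUntil hv
    have hw : (Walk.cons h.symm Walk.nil : G.Walk v u).IsPath := by
      simp [Walk.cons_isPath_iff, h.ne']
    have he : p.dropUntil v hv = Walk.cons h.symm Walk.nil := by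
      rw [upath_eq hG hq]; exact (upath_eq hG hw).symm
    have hspec := p.take_spec hv
    rw [he] at hspec
    have hlen : p.length = (p.takeUntil v hv).length + 1 := by
      conv_lhs => rw [← hspec]
      rw [Walk.length_append]
      rfl
    rw [par, ← hpdef, hlen]
    simp only [Nat.add_sub_cancel]
    have hg := congrArg (fun w : G.Walk r u => w.getVert (p.takeUntil v hv).length) hspec
    simp only [Walk.getVert_append, lt_self_iff_false, if_false, Nat.sub_self,
      Walk.getVert_zero] at hg
    exact hg.symm
  · right
    set p := upath hG r u with hpdef
    have hpath : (p.concat h).IsPath := by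
      rw [← Walk.isPath_reverse_iff, Walk.reverse_concat]
      exact ((upath_isPath hG r u).reverse).cons (by
        simpa [Walk.support_reverse] using hv)
    have he : p.concat h = upath hG r v := upath_eq hG hpath
    rw [par, ← he]
    rw [Walk.length_concat]
    simp only [Nat.add_sub_cancel]
    rw [Walk.concat_eq_append, Walk.getVert_append]
    simp

lemma IsPath.getVert_inj {u v : V} {p : G.Walk u v} (hp : p.IsPath) {i j : ℕ}
    (hi : i ≤ p.length) (hj : j ≤ p.length) (h : p.getVert i = p.getVert j) : i = j := by
  induction p generalizing i j with
  | nil => simp_all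
  | @cons a b c hadj q ih =>
    rw [Walk.cons_isPath_iff] at hp
    match i, j with
    | 0, 0 => rfl
    | 0, j + 1 =>
      exfalso
      apply hp.2
      rw [Walk.mem_support_iff_exists_getVert]
      refine ⟨j, ?_, ?_⟩
      · rw [Walk.getVert_zero, Walk.getVert_cons_succ] at h
        exact h.symm
      · simpa [Walk.length_cons] using hj
    | i + 1, 0 =>
      exfalso
      apply hp.2
      rw [Walk.mem_support_iff_exists_getVert]
      refine ⟨i, ?_, ?_⟩
      · rw [Walk.getVert_zero, Walk.getVert_cons_succ] at h
        exact h
      · simpa [Walk.length_cons] using hi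
    | i + 1, j + 1 =>
      have := ih hp.1 (by simpa [Walk.length_cons] using hi)
        (by simpa [Walk.length_cons] using hj) (by simpa [Walk.getVert_cons_succ] using h)
      omega

lemma par_getVert (hG : G.IsTree) {r b : V} (P : G.Walk r b) (hP : P.IsPath) {i : ℕ}
    (hi : i < P.length) : par hG r (P.getVert (i + 1)) = P.getVert i := by
  have hx : P.getVert (i + 1) ∈ P.support :=
    Walk.mem_support_iff_exists_getVert.2 ⟨i + 1, rfl, hi⟩
  set Q := P.takeUntil _ hx with hQ
  have hQP : Q.IsPath := hP.takeUntil hx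
  have hQle : Q.length ≤ P.length := P.length_takeUntil_le hx
  have hspec := P.take_spec hx
  have hgv : ∀ j, j ≤ Q.length → Q.getVert j = P.getVert j := by
    intro j hj
    conv_rhs => rw [← hspec]
    rw [Walk.getVert_append]
    rcases lt_or_eq_of_le hj with hj' | hj'
    · rw [if_pos hj']
    · subst hj'
      rw [if_neg (lt_irrefl _), Nat.sub_self, Walk.getVert_zero, Walk.getVert_length]
  have hPQ : P.getVert Q.length = P.getVert (i + 1) := by
    rw [← hgv Q.length le_rfl, Walk.getVert_length]
  have hlen : Q.length = i + 1 := IsPath.getVert_inj hP hQle hi hPQ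
  rw [par, ← upath_eq hG hQP, hlen]
  simp only [Nat.add_sub_cancel]
  rw [hgv i (by omega)]

lemma tree_eq {G₁ G₂ : SimpleGraph V} (h₁ : G₁.IsTree) (h₂ : G₂.IsTree) (r : V)
    (hpar : ∀ v, par h₁ r v = par h₂ r v) : G₁ = G₂ := by
  have key : ∀ (A B : SimpleGraph V) (hA : A.IsTree) (hB : B.IsTree),
      (∀ v, par hA r v = par hB r v) → ∀ u v, A.Adj u v → B.Adj u v := by
    intro A B hA hB hp u v h
    rcases edge_par hA r h with he | he
    · have hu : u ≠ r := by
        rintro rfl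
        rw [par_self] at he
        exact h.ne he
      have := adj_par hB (v := u) hu
      rw [← hp u, he] at this
      exact this.symm
    · have hv : v ≠ r := by
        rintro rfl
        rw [par_self] at he
        exact h.ne he.symm
      have := adj_par hB (v := v) hv
      rw [← hp v, he] at this
      exact this
  ext u v
  exact ⟨key G₁ G₂ h₁ h₂ hpar u v, key G₂ G₁ h₂ h₁ (fun v => (hpar v).symm) u v⟩

end GWAux

namespace GWAux

open SimpleGraph

lemma ncard_trees_le (t m : ℕ) (ℓ' : ℝ) (hm : m = ⌈ℓ'⌉₊) :
    {T : SimpleGraph (Fin t) | T.IsTree ∧ HasLongPath T ℓ'}.ncard ≤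
      t.descFactorial (m + 1) * t ^ (t - (m + 1)) := by
  classical
  set S := {T : SimpleGraph (Fin t) | T.IsTree ∧ HasLongPath T ℓ'} with hS
  have hch : ∀ T : S, ∃ (a : Fin t) (b : Fin t) (P : (T : SimpleGraph (Fin t)).Walk a b),
      P.IsPath ∧ ℓ' ≤ (P.length : ℝ) := fun T => T.2.2
  choose aa bb PP hP hlen using hch
  have htree : ∀ T : S, (T : SimpleGraph (Fin t)).IsTree := fun T => T.2.1
  have hmlen : ∀ T : S, m ≤ (PP T).length := by
    intro T
    rw [hm]
    exact Nat.ceil_le.2 (hlen T)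
  set e : ∀ T : S, Fin (m + 1) → Fin t := fun T i => (PP T).getVert i with he
  have einj : ∀ T : S, Function.Injective (e T) := by
    intro T i j hij
    exact Fin.ext (IsPath.getVert_inj (hP T)
      (le_trans (Nat.lt_succ_iff.1 i.isLt) (hmlen T))
      (le_trans (Nat.lt_succ_iff.1 j.isLt) (hmlen T)) hij)
  set E : ∀ T : S, Fin (m + 1) ↪ Fin t := fun T => ⟨e T, einj T⟩ with hE
  set g : ∀ T : S, (↥(Set.range ⇑(E T))ᶜ) → Fin t :=
    fun T v => par (htree T) (aa T) v.1 with hg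
  set F : S → Σ e' : Fin (m + 1) ↪ Fin t, (↥(Set.range ⇑e')ᶜ → Fin t) :=
    fun T => ⟨E T, g T⟩ with hF
  set eval : (Σ e' : Fin (m + 1) ↪ Fin t, (↥(Set.range ⇑e')ᶜ → Fin t)) →
      Fin t → Option (Fin t) :=
    fun p v => if h : v ∈ (Set.range ⇑p.1)ᶜ then some (p.2 ⟨v, h⟩) else none with heval
  have Finj : Function.Injective F := by
    intro T₁ T₂ hFe
    have hfst : e T₁ = e T₂ :=
      congrArg (fun p : (e' : Fin (m + 1) ↪ Fin t) × (↥(Set.range ⇑e')ᶜ → Fin t) =>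
        (p.1 : Fin (m + 1) → Fin t)) hFe
    have ha : aa T₁ = aa T₂ := by
      have h0 := congrFun hfst 0
      simpa [he, Walk.getVert_zero] using h0
    have hev := congrArg eval hFe
    have hpar : ∀ v, par (htree T₁) (aa T₁) v = par (htree T₂) (aa T₂) v := by
      intro v
      by_cases hv : v ∈ Set.range (e T₁)
      · obtain ⟨i, hi⟩ := hv
        rcases i with ⟨iv, hivlt⟩
        cases iv with
        | zero =>
          have hv1 : v = aa T₁ := by
            rw [← hi]
            simp [he, Walk.getVert_zero]
          rw [hv1, par_self, ← ha, par_self]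
        | succ j =>
          have hj1 : j < (PP T₁).length := by
            have := hmlen T₁; omega
          have hj2 : j < (PP T₂).length := by
            have := hmlen T₂; omega
          have hjlt : j < m + 1 := by omega
          have hv1 : v = (PP T₁).getVert (j + 1) := hi.symm
          have hv2 : v = (PP T₂).getVert (j + 1) := by
            rw [← hi]
            exact congrFun hfst ⟨j + 1, hivlt⟩
          have h12 : (PP T₁).getVert (j + 1) = (PP T₂).getVert (j + 1) := hv1.symm.trans hv2
          rw [hv1, par_getVert (htree T₁) (PP T₁) (hP T₁) hj1, h12,
            par_getVert (htree T₂) (PP T₂) (hP T₂) hj2]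
          exact congrFun hfst ⟨j, hjlt⟩
      · have hv1 : v ∈ (Set.range ⇑(E T₁))ᶜ := hv
        have hv2 : v ∈ (Set.range ⇑(E T₂))ᶜ := by
          intro hmem
          exact hv (hfst ▸ hmem)
        have h1 := congrFun hev v
        simp only [heval] at h1
        rw [dif_pos hv1, dif_pos hv2] at h1
        exact Option.some_injective _ h1
    apply Subtype.ext
    refine tree_eq (htree T₁) (htree T₂) (aa T₁) ?_
    intro v
    rw [hpar v, ha]
  have hfin : Finite (Σ e' : Fin (m + 1) ↪ Fin t, (↥(Set.range ⇑e')ᶜ → Fin t)) := by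
    infer_instance
  calc S.ncard = Nat.card S := (Nat.card_coe_set_eq S).symm
    _ ≤ Nat.card (Σ e' : Fin (m + 1) ↪ Fin t, (↥(Set.range ⇑e')ᶜ → Fin t)) :=
        Nat.card_le_card_of_injective F Finj
    _ = t.descFactorial (m + 1) * t ^ (t - (m + 1)) := by
        rw [Nat.card_eq_fintype_card, Fintype.card_sigma]
        have hcard : ∀ e' : Fin (m + 1) ↪ Fin t,
            Fintype.card (↥(Set.range ⇑e')ᶜ → Fin t) = t ^ (t - (m + 1)) := by
          intro e'
          rw [Fintype.card_fun, Fintype.card_fin]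
          congr 1
          rw [Fintype.card_compl_set, Fintype.card_range e', Fintype.card_fin, Fintype.card_fin]
        simp only [hcard]
        rw [Finset.sum_const, Finset.card_univ, Fintype.card_embedding_eq]
        simp [Fintype.card_fin]

end GWAux

namespace GWAux

open SimpleGraph Finset

lemma pTree_nonneg (t : ℕ) (ℓ' : ℝ) : 0 ≤ pTree t ℓ' :=
  div_nonneg (Nat.cast_nonneg _) (pow_nonneg (Nat.cast_nonneg _) _)

lemma descFactorial_le (t m : ℕ) (ht : 1 ≤ t) :
    (t.descFactorial (m + 1) : ℝ) ≤ (t : ℝ) ^ (m + 1) * Real.exp (-(m : ℝ) ^ 2 / (2 * t)) := by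
  have htpos : (0 : ℝ) < t := by exact_mod_cast ht
  have h1 : (t.descFactorial (m + 1) : ℝ) = ∏ i ∈ range (m + 1), ((t - i : ℕ) : ℝ) := by
    rw [Nat.descFactorial_eq_prod_range]
    push_cast [Nat.cast_prod]
    rfl
  have h2 : ∀ i ∈ range (m + 1), ((t - i : ℕ) : ℝ) ≤ (t : ℝ) * Real.exp (-(i : ℝ) / t) := by
    intro i _
    rcases le_or_gt i t with hit | hit
    · have hc : ((t - i : ℕ) : ℝ) = (t : ℝ) - i := by
        push_cast [hit]
        ring
      rw [hc]
      have hexp : (-(i : ℝ) / t) + 1 ≤ Real.exp (-(i : ℝ) / t) := Real.add_one_le_exp _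
      calc (t : ℝ) - i = (t : ℝ) * ((-(i : ℝ) / t) + 1) := by
            field_simp
            ring
        _ ≤ (t : ℝ) * Real.exp (-(i : ℝ) / t) :=
            mul_le_mul_of_nonneg_left hexp (le_of_lt htpos)
    · have hc : ((t - i : ℕ) : ℝ) = 0 := by
        rw [Nat.sub_eq_zero_of_le (le_of_lt hit)]
        simp
      rw [hc]
      positivity
  calc (t.descFactorial (m + 1) : ℝ) = ∏ i ∈ range (m + 1), ((t - i : ℕ) : ℝ) := h1
    _ ≤ ∏ i ∈ range (m + 1), (t : ℝ) * Real.exp (-(i : ℝ) / t) := by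
        apply Finset.prod_le_prod (fun i _ => Nat.cast_nonneg _) h2
    _ = (t : ℝ) ^ (m + 1) * Real.exp (∑ i ∈ range (m + 1), (-(i : ℝ) / t)) := by
        rw [Finset.prod_mul_distrib, Finset.prod_const, Real.exp_sum, Finset.card_range]
    _ ≤ (t : ℝ) ^ (m + 1) * Real.exp (-(m : ℝ) ^ 2 / (2 * t)) := by
        apply mul_le_mul_of_nonneg_left _ (by positivity)
        apply Real.exp_le_exp.2
        have hsum : ∑ i ∈ range (m + 1), (-(i : ℝ) / t) = -(∑ i ∈ range (m + 1), (i : ℝ)) / t := by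
          rw [← Finset.sum_div, ← Finset.sum_neg_distrib]
        have hid : (∑ i ∈ range (m + 1), (i : ℝ)) = (m : ℝ) * (m + 1) / 2 := by
          have := Finset.sum_range_id_mul_two (m + 1)
          have hc : ((∑ i ∈ range (m + 1), i) * 2 : ℕ) = ((m + 1) * m : ℕ) := by
            simpa using this
          have := congrArg (fun n : ℕ => (n : ℝ)) hc
          push_cast at this
          nlinarith [this]
        rw [hsum, hid]
        rw [div_le_div_iff₀ (by positivity) (by positivity)]
        nlinarith [mul_nonneg (Nat.cast_nonneg m : (0:ℝ) ≤ (m:ℝ)) htpos.le]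

end GWAux

namespace GWAux

lemma pTree_le (t : ℕ) (ht : 1 ≤ t) (ℓ' : ℝ) (m : ℕ) (hm : m = ⌈ℓ'⌉₊) (hm1 : 1 ≤ m) :
    pTree t ℓ' ≤ (t : ℝ) ^ 2 * Real.exp (-(m : ℝ) ^ 2 / (2 * t)) := by
  have htpos : (0 : ℝ) < t := by exact_mod_cast ht
  rw [pTree, div_le_iff₀ (by positivity)]
  have hb := ncard_trees_le t m ℓ' hm
  by_cases htm : t < m + 1
  · have h0 : t.descFactorial (m + 1) = 0 := by
      rw [Nat.descFactorial_eq_zero_iff_lt]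
      omega
    rw [h0, Nat.zero_mul, Nat.le_zero] at hb
    rw [hb]
    push_cast
    positivity
  · push_neg at htm
    have ht2 : 2 ≤ t := by omega
    calc ({T : SimpleGraph (Fin t) | T.IsTree ∧ HasLongPath T ℓ'}.ncard : ℝ)
        ≤ (t.descFactorial (m + 1) : ℝ) * (t : ℝ) ^ (t - (m + 1)) := by
          exact_mod_cast hb
      _ ≤ ((t : ℝ) ^ (m + 1) * Real.exp (-(m : ℝ) ^ 2 / (2 * t))) * (t : ℝ) ^ (t - (m + 1)) := by
          apply mul_le_mul_of_nonneg_right (descFactorial_le t m ht) (by positivity)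
      _ = (t : ℝ) ^ 2 * Real.exp (-(m : ℝ) ^ 2 / (2 * t)) * (t : ℝ) ^ (t - 2) := by
          rw [mul_right_comm, mul_right_comm ((t:ℝ)^2) _ ((t:ℝ)^(t-2))]
          congr 1
          rw [← pow_add, ← pow_add]
          congr 1
          omega

end GWAux

namespace GWAux

lemma cube_le_exp {x : ℝ} (hx : 0 ≤ x) : (1 + x / 3) ^ 3 ≤ Real.exp x := by
  have h1 : (0:ℝ) ≤ 1 + x / 3 := by linarith
  have h2 : 1 + x / 3 ≤ Real.exp (x / 3) := by
    have := Real.add_one_le_exp (x / 3)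
    linarith
  calc (1 + x / 3) ^ 3 ≤ Real.exp (x / 3) ^ 3 := pow_le_pow_left₀ h1 h2 3
    _ = Real.exp x := by
      rw [← Real.exp_nat_mul]
      norm_num
      ring

lemma one_add_le_exp_sub {ε : ℝ} (hε : 0 < ε) (hε1 : ε ≤ 1 / 2) :
    (1 + ε) * Real.exp (-ε) ≤ Real.exp (-(ε ^ 2 / 4)) := by
  have hx : 0 ≤ ε - ε ^ 2 / 4 := by nlinarith
  have h1 : (1 + (ε - ε ^ 2 / 4) / 3) ^ 3 ≤ Real.exp (ε - ε ^ 2 / 4) := cube_le_exp hx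
  have h2 : 1 + ε ≤ (1 + (ε - ε ^ 2 / 4) / 3) ^ 3 := by
    nlinarith [sq_nonneg ε, pow_pos hε 3, pow_pos hε 4, pow_pos hε 5, pow_pos hε 6, hε.le, hε1]
  calc (1 + ε) * Real.exp (-ε) ≤ Real.exp (ε - ε ^ 2 / 4) * Real.exp (-ε) :=
        mul_le_mul_of_nonneg_right (h2.trans h1) (Real.exp_pos _).le
    _ = Real.exp (-(ε ^ 2 / 4)) := by
        rw [← Real.exp_add]
        ring_nf

lemma sq_le_exp {z : ℝ} (hz : 0 ≤ z) : z ^ 2 ≤ 4 * Real.exp z := by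
  have h1 : 1 + z / 2 ≤ Real.exp (z / 2) := by
    have := Real.add_one_le_exp (z / 2)
    linarith
  have h2 : (z / 2) ^ 2 ≤ Real.exp (z / 2) ^ 2 := by
    apply pow_le_pow_left₀ (by positivity)
    calc z / 2 ≤ 1 + z / 2 := by linarith
      _ ≤ Real.exp (z / 2) := h1
  have h3 : Real.exp (z / 2) ^ 2 = Real.exp z := by
    rw [← Real.exp_nat_mul]
    norm_num
    ring
  nlinarith [h2, h3]

end GWAux

namespace GWAux

lemma amgm {x y c : ℝ} (hx : 0 ≤ x) (hy : 0 ≤ y) (hc : 0 ≤ c) (h : x * y = c ^ 2) :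
    2 * c ≤ x + y := by
  nlinarith [sq_nonneg (x - y), sq_nonneg (x + y), mul_nonneg hx hy]

lemma pow_self_le_factorial_mul_exp (t : ℕ) : (t : ℝ) ^ t ≤ (t.factorial : ℝ) * Real.exp t := by
  have hfac : (0 : ℝ) < (t.factorial : ℝ) := by exact_mod_cast t.factorial_pos
  have h := Real.sum_le_exp_of_nonneg (x := (t : ℝ)) (by positivity) (t + 1)
  have h2 : (t : ℝ) ^ t / (t.factorial : ℝ) ≤ ∑ i ∈ Finset.range (t + 1), (t : ℝ) ^ i / i.factorial := by
    exact Finset.single_le_sum (f := fun i => (t : ℝ) ^ i / (i.factorial : ℝ))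
      (fun i _ => by positivity) (Finset.self_mem_range_succ t)
  have h3 := h2.trans h
  rw [div_le_iff₀ hfac] at h3
  linarith [h3]

lemma exp_two_le_eight : Real.exp 2 ≤ 8 := by
  have h1 : Real.exp 1 < 2.7182818286 := Real.exp_one_lt_d9
  have h2 : Real.exp 2 = Real.exp 1 * Real.exp 1 := by
    rw [← Real.exp_add]
    norm_num
  nlinarith [Real.exp_pos 1]

lemma exp_neg_two_le_mu {ε μ : ℝ} (hε : 0 < ε) (hε1 : ε ≤ 1) (hμ : 0 < μ)
    (hfix : μ * Real.exp (-μ) = (1 + ε) * Real.exp (-(1 + ε))) : Real.exp (-2) ≤ μ := by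
  have h1 : Real.exp (-2) ≤ Real.exp (-(1 + ε)) := Real.exp_le_exp.2 (by linarith)
  have h2 : Real.exp (-(1 + ε)) ≤ (1 + ε) * Real.exp (-(1 + ε)) := by
    nlinarith [Real.exp_pos (-(1 + ε))]
  have h3 : μ * Real.exp (-μ) ≤ μ := by
    nlinarith [Real.exp_le_one_iff.2 (by linarith : -μ ≤ 0), Real.exp_pos (-μ)]
  linarith [hfix ▸ (h1.trans h2)]

lemma one_sub_exp_neg {b : ℝ} (hb0 : 0 ≤ b) (hb1 : b ≤ 1) : b / 2 ≤ 1 - Real.exp (-b) := by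
  have h1 : b + 1 ≤ Real.exp b := Real.add_one_le_exp b
  have h2 : Real.exp (-b) = (Real.exp b)⁻¹ := Real.exp_neg b
  have h3 : (Real.exp b)⁻¹ ≤ (1 + b)⁻¹ := by
    apply inv_anti₀ (by linarith)
    linarith
  have h4 : (1 + b)⁻¹ ≤ 1 - b / 2 := by
    rw [inv_le_iff_one_le_mul₀ (by linarith)]
    nlinarith
  rw [h2]
  linarith

end GWAux

namespace GWAux

lemma sq_mul_exp_le {ε : ℝ} (hε : 0 < ε) (t : ℕ) :
    (t : ℝ) ^ 2 * Real.exp (-(ε ^ 2 / 8) * t) ≤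
      (32 / ε ^ 2) ^ 2 * Real.exp (-(ε ^ 2 / 16) * t) := by
  have hz : (0 : ℝ) ≤ ε ^ 2 / 16 * t := by positivity
  have h := sq_le_exp hz
  have h2 : (t : ℝ) ^ 2 = (ε ^ 2 / 16 * t) ^ 2 * (256 / ε ^ 4) := by
    field_simp
    ring
  calc (t : ℝ) ^ 2 * Real.exp (-(ε ^ 2 / 8) * t)
      = (ε ^ 2 / 16 * t) ^ 2 * ((256 / ε ^ 4) * Real.exp (-(ε ^ 2 / 8) * t)) := by
        rw [h2]; ring
    _ ≤ (4 * Real.exp (ε ^ 2 / 16 * t)) * ((256 / ε ^ 4) * Real.exp (-(ε ^ 2 / 8) * t)) := by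
        apply mul_le_mul_of_nonneg_right h (by positivity)
    _ = (1024 / ε ^ 4) * (Real.exp (ε ^ 2 / 16 * t) * Real.exp (-(ε ^ 2 / 8) * t)) := by
        ring
    _ = (32 / ε ^ 2) ^ 2 * Real.exp (-(ε ^ 2 / 16) * t) := by
        rw [← Real.exp_add]
        congr 1
        · field_simp
          ring
        · ring

lemma term_le {ε μ : ℝ} (hε : 0 < ε) (hε1 : ε ≤ 1 / 10) (hμ : 0 < μ)
    (hfix : μ * Real.exp (-μ) = (1 + ε) * Real.exp (-(1 + ε)))
    {m : ℕ} (hm1 : 1 ≤ m) (ℓ' : ℝ) (hm : m = ⌈ℓ'⌉₊) (t : ℕ) :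
    ((t : ℝ) ^ (t - 1) * (μ * Real.exp (-μ)) ^ t / (μ * (t.factorial : ℝ))) * (t : ℝ) *
        pTree t ℓ'
      ≤ (Real.exp 2 * (32 / ε ^ 2) ^ 2 * Real.exp (-(ε * m / 2))) *
          Real.exp (-(ε ^ 2 / 16)) ^ t := by
  rcases Nat.eq_zero_or_pos t with rfl | ht
  · simp
    positivity
  have htR : (0 : ℝ) < t := by exact_mod_cast ht
  have hfacpos : (0 : ℝ) < (t.factorial : ℝ) := by exact_mod_cast t.factorial_pos
  have hpt0 : 0 ≤ pTree t ℓ' := pTree_nonneg t ℓ'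
  have hP := pTree_le t ht ℓ' m hm hm1
  have hpow : (t : ℝ) ^ (t - 1) * (t : ℝ) = (t : ℝ) ^ t := by
    rw [← pow_succ]
    congr 1
    omega
  have hmu2 : Real.exp (-2) ≤ μ := exp_neg_two_le_mu hε (by linarith) hμ hfix
  have hB : (t : ℝ) ^ t / (μ * (t.factorial : ℝ)) ≤ Real.exp 2 * Real.exp t := by
    rw [div_le_iff₀ (by positivity)]
    have h1 : (t : ℝ) ^ t ≤ (t.factorial : ℝ) * Real.exp t := pow_self_le_factorial_mul_exp t
    have h2 : (1 : ℝ) ≤ Real.exp 2 * μ := by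
      have := mul_le_mul_of_nonneg_left hmu2 (Real.exp_pos 2).le
      rwa [← Real.exp_add, (by norm_num : (2 : ℝ) + -2 = 0), Real.exp_zero] at this
    nlinarith [mul_pos hfacpos (Real.exp_pos (t : ℝ)), Real.exp_pos (t : ℝ)]
  have hxe : Real.exp t * (μ * Real.exp (-μ)) ^ t = ((1 + ε) * Real.exp (-ε)) ^ t := by
    rw [hfix, ← Real.exp_one_pow, ← mul_pow]
    congr 1
    rw [mul_left_comm, ← Real.exp_add]
    congr 1
    ring
  have hx0 : (0 : ℝ) ≤ μ * Real.exp (-μ) := by positivity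
  have hexps : Real.exp (-(ε ^ 2 / 4)) ^ t =
      Real.exp (-(ε ^ 2 / 8) * t) * Real.exp (-(ε ^ 2 / 8) * t) := by
    rw [← Real.exp_nat_mul, ← Real.exp_add]
    congr 1
    ring
  have hamgm : Real.exp (-(ε ^ 2 / 8) * t) * Real.exp (-(m : ℝ) ^ 2 / (2 * t)) ≤
      Real.exp (-(ε * m / 2)) := by
    rw [← Real.exp_add]
    have harg : -(ε ^ 2 / 8) * (t : ℝ) + -(m : ℝ) ^ 2 / (2 * t) =
        -(ε ^ 2 / 8 * t + (m : ℝ) ^ 2 / (2 * t)) := by ring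
    rw [harg]
    apply Real.exp_le_exp.2
    have h := amgm (x := ε ^ 2 / 8 * t) (y := (m : ℝ) ^ 2 / (2 * t)) (c := ε * m / 4)
      (by positivity) (by positivity) (by positivity) (by field_simp; ring)
    linarith [h]
  calc ((t : ℝ) ^ (t - 1) * (μ * Real.exp (-μ)) ^ t / (μ * (t.factorial : ℝ))) * (t : ℝ) *
        pTree t ℓ'
      = ((t : ℝ) ^ t / (μ * (t.factorial : ℝ))) * (μ * Real.exp (-μ)) ^ t * pTree t ℓ' := by
        rw [← hpow]
        ring
    _ ≤ (Real.exp 2 * Real.exp t) * (μ * Real.exp (-μ)) ^ t * pTree t ℓ' := by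
        apply mul_le_mul_of_nonneg_right _ hpt0
        exact mul_le_mul_of_nonneg_right hB (by positivity)
    _ = Real.exp 2 * (Real.exp t * (μ * Real.exp (-μ)) ^ t) * pTree t ℓ' := by
        ring
    _ = Real.exp 2 * ((1 + ε) * Real.exp (-ε)) ^ t * pTree t ℓ' := by
        rw [hxe]
    _ ≤ Real.exp 2 * Real.exp (-(ε ^ 2 / 4)) ^ t * pTree t ℓ' := by
        apply mul_le_mul_of_nonneg_right _ hpt0
        apply mul_le_mul_of_nonneg_left _ (Real.exp_pos 2).le
        exact pow_le_pow_left₀ (by positivity) (one_add_le_exp_sub hε (by linarith)) t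
    _ ≤ Real.exp 2 * Real.exp (-(ε ^ 2 / 4)) ^ t *
          ((t : ℝ) ^ 2 * Real.exp (-(m : ℝ) ^ 2 / (2 * t))) := by
        apply mul_le_mul_of_nonneg_left hP (by positivity)
    _ = Real.exp 2 * ((t : ℝ) ^ 2 * Real.exp (-(ε ^ 2 / 8) * t)) *
          (Real.exp (-(ε ^ 2 / 8) * t) * Real.exp (-(m : ℝ) ^ 2 / (2 * t))) := by
        rw [hexps]
        ring
    _ ≤ Real.exp 2 * ((32 / ε ^ 2) ^ 2 * Real.exp (-(ε ^ 2 / 16) * t)) *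
          Real.exp (-(ε * m / 2)) := by
        apply mul_le_mul (mul_le_mul_of_nonneg_left (sq_mul_exp_le hε t) (Real.exp_pos 2).le)
          hamgm (by positivity) (by positivity)
    _ = (Real.exp 2 * (32 / ε ^ 2) ^ 2 * Real.exp (-(ε * m / 2))) *
          Real.exp (-(ε ^ 2 / 16)) ^ t := by
        rw [← Real.exp_nat_mul]
        ring_nf

end GWAux

/-- **Lemma (expected size of Galton–Watson trees with long paths).** There exist
constants `C, ε₀ > 0` such that for every `ε ∈ (0, ε₀)`: if `μ ∈ (0,1)` satisfies
`μe^{−μ} = (1+ε)e^{−(1+ε)}` and `ℓ = (C/ε)·ln(1/ε)`, then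
`∑_{t ≥ 1} (t^{t−1}(μe^{−μ})^t/(μ·t!)) · t · p_{t,ℓ/3}`
(the `t = 0` summand below vanishes thanks to the factor `t`). -/
theorem expected_size_of_GW_trees_with_long_paths :
    ∃ C > (0 : ℝ), ∃ ε₀ > (0 : ℝ), ∀ ε : ℝ, 0 < ε → ε < ε₀ →
      ∀ μ : ℝ, 0 < μ → μ < 1 →
        μ * Real.exp (-μ) = (1 + ε) * Real.exp (-(1 + ε)) →
        (∑' t : ℕ,
            ((t : ℝ) ^ (t - 1) * (μ * Real.exp (-μ)) ^ t / (μ * (t.factorial : ℝ))) *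
              (t : ℝ) * pTree t (((C / ε) * Real.log (1 / ε)) / 3))
          ≤ 14 * ε ^ 3 := by
  refine ⟨180, by norm_num, 1 / 10, by norm_num, ?_⟩
  intro ε hε hε10 μ hμ0 hμ1 hfix
  open GWAux in
  set ℓ' : ℝ := (((180 : ℝ) / ε) * Real.log (1 / ε)) / 3 with hℓ'
  have hεle : ε ≤ 1 / 10 := le_of_lt hε10
  have hlog : 0 < Real.log (1 / ε) := by
    apply Real.log_pos
    rw [lt_div_iff₀ hε]
    linarith
  have hℓpos : 0 < ℓ' := by
    rw [hℓ']
    positivity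
  set m : ℕ := ⌈ℓ'⌉₊ with hm
  have hm1 : 1 ≤ m := Nat.one_le_iff_ne_zero.2 (by
    have := Nat.ceil_pos.2 hℓpos
    omega)
  have hmge : (60 / ε) * Real.log (1 / ε) ≤ (m : ℝ) := by
    have h1 := Nat.le_ceil ℓ'
    have h2 : (60 / ε) * Real.log (1 / ε) = ℓ' := by
      rw [hℓ']
      ring
    rw [h2]
    exact_mod_cast h1
  set K := Real.exp 2 * (32 / ε ^ 2) ^ 2 * Real.exp (-(ε * m / 2)) with hK
  set r := Real.exp (-(ε ^ 2 / 16)) with hr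
  have hr0 : 0 ≤ r := (Real.exp_pos _).le
  have hr1 : r < 1 := by
    rw [hr]
    apply Real.exp_lt_one_iff.2
    have : 0 < ε ^ 2 / 16 := by positivity
    linarith
  have hK0 : 0 ≤ K := by positivity
  set f : ℕ → ℝ := fun t =>
    ((t : ℝ) ^ (t - 1) * (μ * Real.exp (-μ)) ^ t / (μ * (t.factorial : ℝ))) *
      (t : ℝ) * pTree t ℓ' with hf
  have hfg : ∀ t, f t ≤ K * r ^ t := fun t =>
    term_le hε hεle hμ0 hfix hm1 ℓ' hm t
  have hf0 : ∀ t, 0 ≤ f t := by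
    intro t
    apply mul_nonneg (mul_nonneg _ (Nat.cast_nonneg t)) (pTree_nonneg _ _)
    apply div_nonneg _ (le_of_lt (mul_pos hμ0 (by exact_mod_cast t.factorial_pos)))
    apply mul_nonneg (pow_nonneg (Nat.cast_nonneg t) _)
    apply pow_nonneg
    positivity
  have hgsum : Summable (fun t : ℕ => K * r ^ t) :=
    (summable_geometric_of_lt_one hr0 hr1).mul_left K
  have hfsum : Summable f := Summable.of_nonneg_of_le hf0 hfg hgsum
  have h1 : (∑' t, f t) ≤ ∑' t, K * r ^ t := Summable.tsum_le_tsum hfg hfsum hgsum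
  have h2 : (∑' t : ℕ, K * r ^ t) = K * (1 - r)⁻¹ := by
    rw [tsum_mul_left, tsum_geometric_of_lt_one hr0 hr1]
  have h1r : 0 < 1 - r := by linarith
  have h3 : (1 - r)⁻¹ ≤ 32 / ε ^ 2 := by
    have hb : ε ^ 2 / 16 ≤ 1 := by nlinarith
    have h4 := one_sub_exp_neg (b := ε ^ 2 / 16) (by positivity) hb
    rw [inv_le_iff_one_le_mul₀ h1r]
    have h5 : (32 / ε ^ 2) * (ε ^ 2 / 32) = 1 := by
      field_simp
    nlinarith [mul_le_mul_of_nonneg_left (show ε ^ 2 / 32 ≤ 1 - r by linarith)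
      (show (0:ℝ) ≤ 32 / ε ^ 2 by positivity)]
  have hexpm : Real.exp (-(ε * m / 2)) ≤ ε ^ 30 := by
    have h4 : 30 * Real.log (1 / ε) ≤ ε * m / 2 := by
      have h5 := mul_le_mul_of_nonneg_left hmge (le_of_lt hε)
      have h6 : ε * ((60 / ε) * Real.log (1 / ε)) = 60 * Real.log (1 / ε) := by
        field_simp
      rw [h6] at h5
      linarith
    calc Real.exp (-(ε * m / 2)) ≤ Real.exp (-(30 * Real.log (1 / ε))) :=
          Real.exp_le_exp.2 (neg_le_neg h4)
      _ = ε ^ 30 := by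
          rw [one_div, Real.log_inv]
          rw [show -(30 * -Real.log ε) = (30 : ℕ) * Real.log ε by push_cast; ring]
          rw [← Real.log_pow, Real.exp_log (by positivity)]
  have hfinal : K * (32 / ε ^ 2) ≤ 14 * ε ^ 3 := by
    have hKle : K ≤ 8 * (32 / ε ^ 2) ^ 2 * ε ^ 30 := by
      rw [hK]
      apply mul_le_mul _ hexpm (Real.exp_pos _).le (by positivity)
      apply mul_le_mul_of_nonneg_right exp_two_le_eight (by positivity)
    have h7 : K * (32 / ε ^ 2) ≤ (8 * (32 / ε ^ 2) ^ 2 * ε ^ 30) * (32 / ε ^ 2) :=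
      mul_le_mul_of_nonneg_right hKle (by positivity)
    have h8 : (8 * (32 / ε ^ 2) ^ 2 * ε ^ 30) * (32 / ε ^ 2) = 262144 * ε ^ 24 := by
      field_simp
      ring
    rw [h8] at h7
    have h9 : ε ^ 21 ≤ (1 / 10) ^ 21 := pow_le_pow_left₀ hε.le hεle 21
    have h10 : 262144 * ε ^ 24 ≤ 14 * ε ^ 3 := by
      have h11 : ε ^ 24 = ε ^ 3 * ε ^ 21 := by ring
      have h12 : ε ^ 3 * ε ^ 21 ≤ ε ^ 3 * (1 / 10) ^ 21 :=
        mul_le_mul_of_nonneg_left h9 (by positivity)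
      rw [h11]
      nlinarith [pow_pos hε 3]
    linarith
  calc (∑' t, f t) ≤ K * (1 - r)⁻¹ := h2 ▸ h1
    _ ≤ K * (32 / ε ^ 2) := mul_le_mul_of_nonneg_left h3 hK0
    _ ≤ 14 * ε ^ 3 := hfinal
end

section
/- Let t, a, b be positive integers with (a+1)·b ≤ t, and let f : [t] → [t] be chosen uniformly at random. Let D be the directed graph on vertex set [t] with edges i → f(i) for each i ∈ [t]. Then the probability that D contains b pairwise vertex-disjoint directed paths, each of length (at least) a, is at most t! / ((t − (a+1)b)! · b!) · (1/t)^{ab}, and moreover this quantity is at most exp( b + b·ln(t/b) − C((a+1)b, 2)/t ), where C(m,2) = m(m−1)/2 denotes the binomial coefficient. -/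
/-- `HasDisjointDirPaths t a b f` : the functional digraph on `[t]` with edges `i → f i`
contains `b` pairwise vertex-disjoint directed paths, each of length at least `a`. -/
def HasDisjointDirPaths (t a b : ℕ) (f : Fin t → Fin t) : Prop :=
  ∃ L : Fin b → ℕ, (∀ j, a ≤ L j) ∧
    ∃ P : ∀ j : Fin b, Fin (L j + 1) → Fin t,
      Function.Injective (fun q : Σ j : Fin b, Fin (L j + 1) => P q.1 q.2) ∧
      ∀ (j : Fin b) (i : Fin (L j)), f (P j i.castSucc) = P j i.succ

private lemma trunc_exists {t a b : ℕ} {f : Fin t → Fin t} (hf : HasDisjointDirPaths t a b f) :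
    ∃ Q : Fin b → Fin (a + 1) → Fin t,
      Function.Injective (fun q : Fin b × Fin (a + 1) => Q q.1 q.2) ∧
      ∀ (j : Fin b) (i : Fin a), f (Q j i.castSucc) = Q j i.succ := by
  obtain ⟨L, hL, P, hinj, hP⟩ := hf
  refine ⟨fun j i => P j ⟨i.1, by have := hL j; omega⟩, ?_, ?_⟩
  · rintro ⟨j, i⟩ ⟨j', i'⟩ h
    have h2 := hinj (a₁ := ⟨j, ⟨i.1, by have := hL j; omega⟩⟩)
      (a₂ := ⟨j', ⟨i'.1, by have := hL j'; omega⟩⟩) h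
    obtain ⟨hj, hi⟩ := Sigma.mk.inj_iff.mp h2
    subst hj
    simp only [heq_eq_eq] at hi
    have hival : i.1 = i'.1 := by have := congrArg Fin.val hi; simpa using this
    simp [Prod.ext_iff, Fin.ext_iff, hival]
  · intro j i
    exact hP j ⟨i.1, by have := hL j; omega⟩

private lemma count_bound (t a b : ℕ) (htab : (a + 1) * b ≤ t) :
    Set.ncard {f : Fin t → Fin t | HasDisjointDirPaths t a b f} * b.factorial
      ≤ t.descFactorial ((a + 1) * b) * t ^ (t - a * b) := by
  classical
  set good := {f : Fin t → Fin t | HasDisjointDirPaths t a b f} with hgood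
  let Q : ∀ _ : good, Fin b → Fin (a + 1) → Fin t := fun f => (trunc_exists f.2).choose
  have hQinj : ∀ f : good, Function.Injective (fun q : Fin b × Fin (a + 1) => Q f q.1 q.2) :=
    fun f => (trunc_exists f.2).choose_spec.1
  have hQedge : ∀ (f : good) (j : Fin b) (i : Fin a),
      f.1 (Q f j i.castSucc) = Q f j i.succ :=
    fun f => (trunc_exists f.2).choose_spec.2
  let g : Equiv.Perm (Fin b) → good → (Fin b × Fin (a + 1)) ↪ Fin t := fun σ f =>
    ⟨fun p => Q f (σ p.1) p.2, by
      intro p p' h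
      have h2 : (σ p.1, p.2) = (σ p'.1, p'.2) := hQinj f h
      rw [Prod.mk.injEq] at h2
      exact Prod.ext (σ.injective h2.1) h2.2⟩
  let S : ((Fin b × Fin (a + 1)) ↪ Fin t) → Set (Fin t) := fun e =>
    Set.range (fun p : Fin b × Fin a => e (p.1, p.2.castSucc))
  have hScard : ∀ e, Nat.card ↥((S e)ᶜ) = t - a * b := by
    intro e
    have hinj : Function.Injective (fun p : Fin b × Fin a => e (p.1, p.2.castSucc)) := by
      intro p p' h
      have h2 := e.injective h
      rw [Prod.mk.injEq] at h2
      exact Prod.ext h2.1 (Fin.castSucc_injective _ h2.2)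
    have h1 : (S e).ncard = a * b := by
      rw [← Nat.card_coe_set_eq, Nat.card_range_of_injective hinj]
      simp [Nat.card_eq_fintype_card, mul_comm]
    have h2 := Set.ncard_add_ncard_compl (S e)
    rw [Nat.card_coe_set_eq]
    have h3 : Nat.card (Fin t) = t := by simp
    have h4 : a * b ≤ t := le_trans (Nat.mul_le_mul_right b (Nat.le_succ a)) htab
    omega
  let E : ∀ e : (Fin b × Fin (a + 1)) ↪ Fin t, Fin (t - a * b) ≃ ↥((S e)ᶜ) :=
    fun e => (Finite.equivFinOfCardEq (hScard e)).symm
  let Φ : Equiv.Perm (Fin b) × good →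
      ((Fin b × Fin (a + 1)) ↪ Fin t) × (Fin (t - a * b) → Fin t) :=
    fun x => (g x.1 x.2, fun k => x.2.1 ((E (g x.1 x.2) k : Fin t)))
  have hΦ : Function.Injective Φ := by
    rintro ⟨σ, f, hf⟩ ⟨σ', f', hf'⟩ h
    rw [Prod.mk.injEq] at h
    obtain ⟨hg, hh⟩ := h
    have hGq : ∀ q : Fin b × Fin (a + 1),
        Q ⟨f, hf⟩ (σ q.1) q.2 = Q ⟨f', hf'⟩ (σ' q.1) q.2 :=
      fun q => DFunLike.congr_fun hg q
    rw [← hg] at hh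
    have hff' : f = f' := by
      funext x
      by_cases hx : x ∈ S (g σ ⟨f, hf⟩)
      · obtain ⟨p, hp⟩ := hx
        have e1 : f x = Q ⟨f, hf⟩ (σ p.1) p.2.succ := by
          rw [← hp]; exact hQedge ⟨f, hf⟩ (σ p.1) p.2
        have e2 : f' x = Q ⟨f', hf'⟩ (σ' p.1) p.2.succ := by
          rw [← hp]
          show f' ((g σ ⟨f, hf⟩) (p.1, p.2.castSucc)) = Q ⟨f', hf'⟩ (σ' p.1) p.2.succ
          have hq : (g σ ⟨f, hf⟩) (p.1, p.2.castSucc) = Q ⟨f', hf'⟩ (σ' p.1) p.2.castSucc :=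
            hGq (p.1, p.2.castSucc)
          rw [hq]
          exact hQedge ⟨f', hf'⟩ (σ' p.1) p.2
        rw [e1, e2]
        exact hGq (p.1, p.2.succ)
      · have h3 := congrFun hh ((E (g σ ⟨f, hf⟩)).symm ⟨x, hx⟩)
        simpa [Equiv.apply_symm_apply] using h3
    subst hff'
    have hσ : σ = σ' := by
      ext j
      have h0 := hGq (j, 0)
      have h1 := hQinj ⟨f, hf⟩ (a₁ := (σ j, 0)) (a₂ := (σ' j, 0)) h0
      rw [Prod.mk.injEq] at h1
      exact congrArg Fin.val h1.1
    rw [Prod.mk.injEq]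
    exact ⟨hσ, Subtype.ext rfl⟩
  have hcard := Nat.card_le_card_of_injective Φ hΦ
  rw [Nat.card_prod, Nat.card_prod, Nat.card_coe_set_eq, Nat.card_fun] at hcard
  have hperm : Nat.card (Equiv.Perm (Fin b)) = b.factorial := by
    simp [Nat.card_eq_fintype_card, Fintype.card_perm]
  have hemb : Nat.card ((Fin b × Fin (a + 1)) ↪ Fin t) = t.descFactorial ((a + 1) * b) := by
    rw [Nat.card_eq_fintype_card, Fintype.card_embedding_eq]
    simp [mul_comm]
  rw [hperm, hemb] at hcard
  simp only [Nat.card_eq_fintype_card, Fintype.card_fin] at hcard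
  calc Set.ncard good * b.factorial = b.factorial * Set.ncard good := by ring
    _ ≤ _ := hcard

/-- **Lemma (disjoint directed paths in a random functional digraph).** For a uniformly
random `f : [t] → [t]`, the probability that the digraph `i → f(i)` contains `b` pairwise
vertex-disjoint directed paths, each of length at least `a`, is at most
`t!/((t−(a+1)b)!·b!)·(1/t)^{ab}`, which in turn is at most
`exp(b + b·ln(t/b) − C((a+1)b, 2)/t)`. -/
theorem random_functional_digraph_disjoint_paths (t a b : ℕ)
    (ht : 0 < t) (ha : 0 < a) (hb : 0 < b) (htab : (a + 1) * b ≤ t) :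
    (Set.ncard {f : Fin t → Fin t | HasDisjointDirPaths t a b f} : ℝ) / (t : ℝ) ^ t
        ≤ (t.factorial : ℝ) / (((t - (a + 1) * b).factorial : ℝ) * (b.factorial : ℝ)) *
            (1 / (t : ℝ)) ^ (a * b) ∧
      (t.factorial : ℝ) / (((t - (a + 1) * b).factorial : ℝ) * (b.factorial : ℝ)) *
            (1 / (t : ℝ)) ^ (a * b)
        ≤ Real.exp ((b : ℝ) + (b : ℝ) * Real.log ((t : ℝ) / (b : ℝ)) -
            ((((a + 1) * b).choose 2 : ℝ)) / (t : ℝ)) := by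
  have hab : a * b ≤ t := le_trans (Nat.mul_le_mul_right b (Nat.le_succ a)) htab
  set m := (a + 1) * b with hm
  set D := t.descFactorial m with hD
  have htpos : (0 : ℝ) < t := by exact_mod_cast ht
  have hbpos : (0 : ℝ) < b := by exact_mod_cast hb
  have hb0 : (b : ℝ) ≠ 0 := hbpos.ne'
  have ht0 : (t : ℝ) ≠ 0 := htpos.ne'
  have hfactpos : (0 : ℝ) < (b.factorial : ℝ) := by exact_mod_cast b.factorial_pos
  have htmpos : (0 : ℝ) < ((t - m).factorial : ℝ) := by exact_mod_cast (t - m).factorial_pos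
  have hfacteq : ((t - m).factorial : ℝ) * (D : ℝ) = (t.factorial : ℝ) := by
    exact_mod_cast congrArg (Nat.cast (R := ℝ)) (Nat.factorial_mul_descFactorial htab)
  have hRHS : (t.factorial : ℝ) / (((t - m).factorial : ℝ) * (b.factorial : ℝ)) *
        (1 / (t : ℝ)) ^ (a * b)
      = (D : ℝ) / ((b.factorial : ℝ) * (t : ℝ) ^ (a * b)) := by
    rw [← hfacteq, div_pow, one_pow]
    field_simp
  constructor
  · rw [hRHS, div_le_div_iff₀ (by positivity) (by positivity)]
    have key : Set.ncard {f : Fin t → Fin t | HasDisjointDirPaths t a b f} * b.factorial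
          * t ^ (a * b) ≤ D * t ^ t := by
      calc Set.ncard {f : Fin t → Fin t | HasDisjointDirPaths t a b f} * b.factorial
            * t ^ (a * b)
          ≤ D * t ^ (t - a * b) * t ^ (a * b) :=
            Nat.mul_le_mul_right _ (count_bound t a b htab)
        _ = D * t ^ t := by rw [mul_assoc, ← pow_add, Nat.sub_add_cancel hab]
    have keyR : (Set.ncard {f : Fin t → Fin t | HasDisjointDirPaths t a b f} : ℝ)
        * (b.factorial : ℝ) * (t : ℝ) ^ (a * b) ≤ (D : ℝ) * (t : ℝ) ^ t := by
      exact_mod_cast key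
    nlinarith [keyR]
  · rw [hRHS]
    have hDle : (D : ℝ) ≤ (t : ℝ) ^ m * Real.exp (-(m.choose 2 : ℝ) / t) := by
      have hprod : (D : ℝ) = ∏ i ∈ Finset.range m, ((t - i : ℕ) : ℝ) := by
        rw [hD, Nat.descFactorial_eq_prod_range]
        push_cast
        rfl
      have hle : ∀ i ∈ Finset.range m, ((t - i : ℕ) : ℝ) ≤ (t : ℝ) * Real.exp (-(i : ℝ) / t) := by
        intro i hi
        have him : i < m := Finset.mem_range.mp hi
        have hit : i ≤ t := le_trans him.le htab
        have h1 : ((t - i : ℕ) : ℝ) = (t : ℝ) - i := by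
          rw [Nat.cast_sub hit]
        rw [h1]
        have h2 := Real.add_one_le_exp (-(i : ℝ) / t)
        have h3 := mul_le_mul_of_nonneg_left h2 htpos.le
        have h4 : (t : ℝ) * (-(i : ℝ) / t + 1) = (t : ℝ) - i := by
          field_simp
          ring
        linarith
      have hsum : (∑ i ∈ Finset.range m, -(i : ℝ) / t) = -(m.choose 2 : ℝ) / t := by
        have h1 : (∑ i ∈ Finset.range m, i) = m.choose 2 := by
          rw [Finset.sum_range_id, Nat.choose_two_right]
        rw [← h1]
        push_cast
        rw [neg_div, ← Finset.sum_div]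
        simp [neg_div, Finset.sum_div]
      calc (D : ℝ) = ∏ i ∈ Finset.range m, ((t - i : ℕ) : ℝ) := hprod
        _ ≤ ∏ i ∈ Finset.range m, (t : ℝ) * Real.exp (-(i : ℝ) / t) :=
            Finset.prod_le_prod (fun i _ => by positivity) hle
        _ = (t : ℝ) ^ m * Real.exp (∑ i ∈ Finset.range m, -(i : ℝ) / t) := by
            rw [Finset.prod_mul_distrib, Finset.prod_const, Real.exp_sum,
              Finset.card_range]
        _ = (t : ℝ) ^ m * Real.exp (-(m.choose 2 : ℝ) / t) := by rw [hsum]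
    have hmsplit : (t : ℝ) ^ m = (t : ℝ) ^ (a * b) * (t : ℝ) ^ b := by
      rw [← pow_add]
      congr 1
      rw [hm]
      ring
    have hB : (t : ℝ) ^ b / (b.factorial : ℝ)
        ≤ Real.exp ((b : ℝ) + (b : ℝ) * Real.log ((t : ℝ) / b)) := by
      have h1 : ((b : ℝ)) ^ b / (b.factorial : ℝ) ≤ Real.exp b := by
        have h2 := Real.sum_le_exp_of_nonneg (x := (b : ℝ)) (by positivity) (b + 1)
        have h3 : ((b : ℝ)) ^ b / (b.factorial : ℝ)
            ≤ ∑ i ∈ Finset.range (b + 1), (b : ℝ) ^ i / i.factorial :=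
          Finset.single_le_sum (f := fun i => (b : ℝ) ^ i / (i.factorial : ℝ))
            (fun i _ => by positivity) (Finset.self_mem_range_succ b)
        linarith
      have h5 : ((t : ℝ) / (b : ℝ)) ^ b = Real.exp ((b : ℝ) * Real.log ((t : ℝ) / b)) := by
        rw [Real.exp_nat_mul, Real.exp_log (by positivity)]
      have h4 : (t : ℝ) ^ b / (b.factorial : ℝ)
          = ((t : ℝ) / b) ^ b * ((b : ℝ) ^ b / (b.factorial : ℝ)) := by
        rw [div_pow]
        field_simp
      calc (t : ℝ) ^ b / (b.factorial : ℝ)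
          = ((t : ℝ) / b) ^ b * ((b : ℝ) ^ b / (b.factorial : ℝ)) := h4
        _ ≤ ((t : ℝ) / b) ^ b * Real.exp b :=
            mul_le_mul_of_nonneg_left h1 (by positivity)
        _ = Real.exp ((b : ℝ) + (b : ℝ) * Real.log ((t : ℝ) / b)) := by
            rw [h5, ← Real.exp_add, add_comm]
    calc (D : ℝ) / ((b.factorial : ℝ) * (t : ℝ) ^ (a * b))
        ≤ ((t : ℝ) ^ m * Real.exp (-(m.choose 2 : ℝ) / t))
            / ((b.factorial : ℝ) * (t : ℝ) ^ (a * b)) := by gcongr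
      _ = ((t : ℝ) ^ b / (b.factorial : ℝ)) * Real.exp (-(m.choose 2 : ℝ) / t) := by
          rw [hmsplit]
          field_simp
      _ ≤ Real.exp ((b : ℝ) + (b : ℝ) * Real.log ((t : ℝ) / b))
            * Real.exp (-(m.choose 2 : ℝ) / t) :=
          mul_le_mul_of_nonneg_right hB (Real.exp_nonneg _)
      _ = Real.exp ((b : ℝ) + (b : ℝ) * Real.log ((t : ℝ) / (b : ℝ))
            - (m.choose 2 : ℝ) / t) := by
          rw [← Real.exp_add]
          ring_nf
end

section
/- Let G ~ 𝒢(n,p), let S ⊆ [n] be a fixed set of size t, and let ℓ ≥ 1. Then the probability that the induced subgraph G[S] is connected and contains a path of length at least ℓ, and that there are no edges of G between S and [n] \ S, is at most p_{t,ℓ} · t^{t−2} · p^{t−1} · (1−p)^{t(n−t)}. -/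
open MeasureTheory

/-- The binomial random graph measure `𝒢(n,p)`: product of Bernoulli(p) measures over
pairs of vertices (the probability is clamped at 1, which is irrelevant for large `n`). -/
noncomputable def gnp (n : ℕ) (p : ℝ) : Measure (Sym2 (Fin n) → Bool) :=
  Measure.pi fun _ => (PMF.bernoulli (min (Real.toNNReal p) 1) (min_le_right _ _)).toMeasure

/-- The graph on `[n]` determined by an outcome `ω` of the edge coin flips. -/
def graphOf {n : ℕ} (ω : Sym2 (Fin n) → Bool) : SimpleGraph (Fin n) where
  Adj v w := v ≠ w ∧ ω s(v, w) = true
  symm := ⟨fun v w ⟨h1, h2⟩ => ⟨h1.symm, by rwa [Sym2.eq_swap]⟩⟩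
  loopless := ⟨fun v ⟨h, _⟩ => h rfl⟩

open SimpleGraph in
/-- The graph consisting of the edges of a path is acyclic. -/
lemma pathGraph_isAcyclic {V : Type*} {G : SimpleGraph V} {a b : V} (P : G.Walk a b)
    (hP : P.IsPath) : (SimpleGraph.fromEdgeSet {e | e ∈ P.edges}).IsAcyclic := by
  classical
  induction P with
  | nil =>
    simp only [Walk.edges_nil, List.not_mem_nil, Set.setOf_false, fromEdgeSet_empty]
    exact isAcyclic_bot
  | @cons u v w h P ih =>
    rw [Walk.cons_isPath_iff] at hP
    obtain ⟨hP', hu⟩ := hP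
    set Hb := fromEdgeSet {e : Sym2 V | e ∈ (Walk.cons h P).edges} with hHb
    have key : ∀ y, Hb.Adj u y → y = v := by
      intro y hy
      rw [hHb, fromEdgeSet_adj] at hy
      obtain ⟨hy1, hy2⟩ := hy
      simp only [Walk.edges_cons, List.mem_cons, Set.mem_setOf_eq] at hy1
      rcases hy1 with h1 | h1
      · rw [Sym2.eq_iff] at h1
        rcases h1 with ⟨_, rfl⟩ | ⟨rfl, rfl⟩
        · rfl
        · exact absurd rfl h.ne
      · exact absurd (P.fst_mem_support_of_mem_edges h1) hu
    intro x c hc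
    by_cases he : s(u, v) ∈ c.edges
    · have hu' : u ∈ c.support := c.fst_mem_support_of_mem_edges he
      have hc' := hc.rotate hu'
      set c' := c.rotate u hu' with hc'def
      obtain ⟨y, h₁, q, hq⟩ := Walk.not_nil_iff.mp hc'.not_nil
      rw [hq] at hc'
      have hyv : y = v := key y h₁
      subst hyv
      rw [Walk.cons_isCycle_iff] at hc'
      obtain ⟨hqp, hqe⟩ := hc'
      have hqnil : ¬ q.reverse.Nil := Walk.not_nil_of_ne h.ne
      obtain ⟨z, h₂, q₂, hq₂⟩ := Walk.not_nil_iff.mp hqnil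
      have hzv : z = y := key z h₂
      have hmem : s(u, z) ∈ q.reverse.edges := by rw [hq₂]; simp
      rw [Walk.edges_reverse, List.mem_reverse, hzv] at hmem
      exact hqe hmem
    · have hsub : ∀ e ∈ c.edges, e ∈ (fromEdgeSet {e : Sym2 V | e ∈ P.edges}).edgeSet := by
        intro e hec
        have h1 : e ∈ Hb.edgeSet := c.edges_subset_edgeSet hec
        rw [hHb, edgeSet_fromEdgeSet] at h1
        obtain ⟨h1, h2⟩ := h1
        simp only [Walk.edges_cons, List.mem_cons, Set.mem_setOf_eq] at h1
        rcases h1 with rfl | h1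
        · exact absurd hec he
        · rw [edgeSet_fromEdgeSet]
          exact ⟨h1, h2⟩
      exact ih hP' (c.transfer _ hsub) (hc.transfer hsub)

open SimpleGraph in
/-- Any acyclic subgraph of a connected finite graph extends to a spanning tree. -/
lemma exists_spanning_tree_aux {V : Type*} [Fintype V] (k : ℕ) :
    ∀ (G : SimpleGraph V), G.edgeSet.ncard ≤ k → G.Connected →
    ∀ (H : SimpleGraph V), H ≤ G → H.IsAcyclic →
    ∃ T : SimpleGraph V, H ≤ T ∧ T ≤ G ∧ T.IsTree := by
  classical
  induction k with
  | zero =>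
    intro G hcard hG H hH _
    by_cases ha : G.IsAcyclic
    · exact ⟨G, hH, le_rfl, hG, ha⟩
    · exfalso
      rw [IsAcyclic] at ha
      push_neg at ha
      obtain ⟨v, c, hc⟩ := ha
      have hnil := hc.not_nil
      rw [Walk.not_nil_iff] at hnil
      obtain ⟨y, hadj, q, _⟩ := hnil
      have : s(v, y) ∈ G.edgeSet := hadj
      have hempty : G.edgeSet = ∅ :=
        (Set.ncard_eq_zero (G.edgeSet.toFinite)).mp (Nat.le_zero.mp hcard)
      rw [hempty] at this
      exact this
  | succ k ih =>
    intro G hcard hG H hH hHa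
    by_cases ha : G.IsAcyclic
    · exact ⟨G, hH, le_rfl, hG, ha⟩
    · rw [IsAcyclic] at ha
      push_neg at ha
      obtain ⟨v, c, hc⟩ := ha
      have hce : ∃ e ∈ c.edges, e ∉ H.edgeSet := by
        by_contra hcon
        push_neg at hcon
        exact hHa (c.transfer H hcon) (hc.transfer hcon)
      obtain ⟨e, hec, heH⟩ := hce
      obtain ⟨⟨a, b⟩, rfl⟩ := e.exists_rep
      change s(a, b) ∈ c.edges at hec
      change s(a, b) ∉ H.edgeSet at heH
      have heG : s(a, b) ∈ G.edgeSet := c.edges_subset_edgeSet hec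
      have hab : G.Adj a b := heG
      have hnb : ¬ G.IsBridge s(a, b) := by
        rw [isBridge_iff_mem_and_forall_cycle_notMem]
        push_neg
        exact ⟨v, c, hc, hec⟩
        exact heG
      have hreach : (G \ fromEdgeSet {s(a, b)}).Reachable a b := by
        rw [isBridge_iff] at hnb
        push_neg at hnb
        exact hnb
      set G' := G \ fromEdgeSet {s(a, b)} with hG'
      have hle : G' ≤ G := sdiff_le
      have hHle : H ≤ G' := by
        intro x y hxy
        rw [hG', sdiff_adj]
        refine ⟨hH hxy, ?_⟩
        rw [fromEdgeSet_adj]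
        rintro ⟨hm, -⟩
        rw [Set.mem_singleton_iff] at hm
        exact heH (by rw [← hm]; exact (H.mem_edgeSet).mpr hxy)
      have step : ∀ x y, G.Adj x y → G'.Reachable x y := by
        intro x y hxy
        by_cases hxy' : s(x, y) = s(a, b)
        · rw [Sym2.eq_iff] at hxy'
          rcases hxy' with ⟨rfl, rfl⟩ | ⟨rfl, rfl⟩
          · exact hreach
          · exact hreach.symm
        · refine Adj.reachable ?_
          rw [hG', sdiff_adj]
          exact ⟨hxy, by rw [fromEdgeSet_adj]; rintro ⟨hm, -⟩; exact hxy' hm⟩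
      have hG'conn : G'.Connected := by
        have hne := hG.nonempty
        rw [connected_iff]
        refine ⟨fun x y => ?_, hne⟩
        obtain ⟨w⟩ := hG.preconnected x y
        induction w with
        | nil => exact Reachable.refl _
        | cons hadj q ihw => exact (step _ _ hadj).trans ihw
      have hcard' : G'.edgeSet.ncard ≤ k := by
        have hedge : G'.edgeSet = G.edgeSet \ {s(a, b)} := by
          rw [hG', edgeSet_sdiff, edgeSet_fromEdgeSet, edgeSet_sdiff_sdiff_isDiag]
        rw [hedge, Set.ncard_diff_singleton_of_mem heG]
        have hpos : 0 < G.edgeSet.ncard := by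
          rw [Set.ncard_pos G.edgeSet.toFinite]
          exact ⟨_, heG⟩
        omega
      obtain ⟨T, h1, h2, h3⟩ := ih G' hcard' hG'conn H hHle hHa
      exact ⟨T, h1, h2.trans hle, h3⟩

open SimpleGraph in
lemma isTree_of_iso {V W : Type*} {G : SimpleGraph V} {G' : SimpleGraph W}
    (φ : G ≃g G') (h : G.IsTree) : G'.IsTree := by
  refine ⟨(Iso.connected_iff φ).mp h.isConnected, ?_⟩
  intro v c hc
  have : (c.map φ.symm.toHom).IsCycle := hc.map φ.symm.toEquiv.injective
  exact h.IsAcyclic _ this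

open SimpleGraph in
lemma hasLongPath_of_iso {V W : Type*} {G : SimpleGraph V} {G' : SimpleGraph W}
    (φ : G ≃g G') {ℓ : ℝ} (h : HasLongPath G ℓ) : HasLongPath G' ℓ := by
  obtain ⟨a, b, P, hP, hl⟩ := h
  exact ⟨φ a, φ b, P.map φ.toHom, Walk.map_isPath_of_injective φ.toEquiv.injective hP,
    by rwa [Walk.length_map]⟩

open SimpleGraph in
lemma ncard_trees_eq {V : Type*} [Fintype V] [DecidableEq V] (t : ℕ)
    (ε : V ≃ Fin t) (ℓ : ℝ) :
    {T : SimpleGraph V | T.IsTree ∧ HasLongPath T ℓ}.ncard =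
      {T : SimpleGraph (Fin t) | T.IsTree ∧ HasLongPath T ℓ}.ncard := by
  classical
  set F : SimpleGraph V → SimpleGraph (Fin t) := fun T => T.comap ε.symm.toEmbedding with hF
  have hFinj : Function.Injective F := by
    intro T₁ T₂ h
    ext x y
    have := congrArg (fun G => SimpleGraph.Adj G (ε x) (ε y)) h
    simpa [hF, comap_adj] using this
  have himg : F '' {T : SimpleGraph V | T.IsTree ∧ HasLongPath T ℓ} =
      {T : SimpleGraph (Fin t) | T.IsTree ∧ HasLongPath T ℓ} := by
    ext T'
    constructor
    · rintro ⟨T, ⟨h1, h2⟩, rfl⟩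
      have φ := (SimpleGraph.Iso.comap ε.symm T).symm
      exact ⟨isTree_of_iso φ h1, hasLongPath_of_iso φ h2⟩
    · rintro ⟨h1, h2⟩
      refine ⟨T'.comap ε.toEmbedding, ?_, ?_⟩
      · have φ := (SimpleGraph.Iso.comap ε T')
        exact ⟨isTree_of_iso φ.symm h1, hasLongPath_of_iso φ.symm h2⟩
      · ext x y
        simp [hF, comap_adj]
  rw [← himg, Set.ncard_image_of_injective _ hFinj]

/-- The probability that a fixed finite family of coins are all true and another disjoint
family are all false. -/
lemma gnp_cylinder (n : ℕ) (p : ℝ) (hp0 : 0 ≤ p) (hp1 : p ≤ 1)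
    (E F : Finset (Sym2 (Fin n))) (hd : Disjoint E F) :
    gnp n p {ω | (∀ e ∈ E, ω e = true) ∧ (∀ e ∈ F, ω e = false)} =
      ENNReal.ofReal p ^ E.card * ENNReal.ofReal (1 - p) ^ F.card := by
  classical
  set ν : Measure Bool := (PMF.bernoulli (min (Real.toNNReal p) 1) (min_le_right _ _)).toMeasure
    with hν
  have hp' : ((min (Real.toNNReal p) 1 : NNReal) : ENNReal) = ENNReal.ofReal p :=
    congrArg ((↑) : NNReal → ENNReal) (min_eq_left (Real.toNNReal_le_one.mpr hp1))
  have hT : ν {true} = ENNReal.ofReal p := by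
    rw [hν, PMF.toMeasure_apply_singleton _ _ (measurableSet_singleton _),
      PMF.bernoulli_apply, Bool.cond_true, hp']
  have hFm : ν {false} = ENNReal.ofReal (1 - p) := by
    rw [hν, PMF.toMeasure_apply_singleton _ _ (measurableSet_singleton _),
      PMF.bernoulli_apply, Bool.cond_false, ENNReal.coe_sub, ENNReal.coe_one, hp', ENNReal.ofReal_sub _ hp0, ENNReal.ofReal_one]
  have hU : ν Set.univ = 1 := measure_univ
  have hset : {ω : Sym2 (Fin n) → Bool | (∀ e ∈ E, ω e = true) ∧ (∀ e ∈ F, ω e = false)} =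
      Set.pi Set.univ
        (fun e => if e ∈ E then {true} else if e ∈ F then ({false} : Set Bool) else Set.univ) := by
    ext ω
    simp only [Set.mem_setOf_eq, Set.mem_pi, Set.mem_univ, forall_true_left]
    constructor
    · rintro ⟨h1, h2⟩ e
      split_ifs with hE hF
      · exact h1 e hE
      · exact h2 e hF
      · trivial
    · intro h
      refine ⟨fun e he => ?_, fun e he => ?_⟩
      · have := h e; rw [if_pos he] at this; exact this
      · have := h e
        rw [if_neg (fun hE => (Finset.disjoint_left.mp hd) hE he), if_pos he] at this
        exact this
  rw [hset, gnp, Measure.pi_pi]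
  have hout : ∀ e ∈ Finset.univ, e ∉ E ∪ F →
      ν (if e ∈ E then {true} else if e ∈ F then ({false} : Set Bool) else Set.univ) = 1 := by
    intro e _ he
    rw [Finset.mem_union] at he
    push_neg at he
    rw [if_neg he.1, if_neg he.2, hU]
  rw [← Finset.prod_subset (Finset.subset_univ (E ∪ F)) hout, Finset.prod_union hd]
  have h1 : ∏ e ∈ E, ν (if e ∈ E then {true} else if e ∈ F then ({false} : Set Bool) else Set.univ)
      = ENNReal.ofReal p ^ E.card := by
    rw [Finset.prod_congr rfl (fun e he => by rw [if_pos he, hT]), Finset.prod_const]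
  have h2 : ∏ e ∈ F, ν (if e ∈ E then {true} else if e ∈ F then ({false} : Set Bool) else Set.univ)
      = ENNReal.ofReal (1 - p) ^ F.card := by
    rw [Finset.prod_congr rfl
      (fun e he => by rw [if_neg (fun hE => (Finset.disjoint_left.mp hd) hE he), if_pos he, hFm]),
      Finset.prod_const]
  rw [h1, h2]

open SimpleGraph in
/-- **Lemma (probability of an isolated small component with a long path).** For a fixed
set `S ⊆ [n]` of size `t` and `ℓ ≥ 1`, the probability that `G[S]` is connected, contains
a path of length at least `ℓ`, and there are no edges of `G` between `S` and `[n] \ S`, is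
at most `p_{t,ℓ} · t^{t−2} · p^{t−1} · (1−p)^{t(n−t)}`. -/
theorem isolated_component_with_long_path_prob (n : ℕ) (p : ℝ) (hp0 : 0 ≤ p) (hp1 : p ≤ 1)
    (S : Finset (Fin n)) (t : ℕ) (hS : S.card = t) (ℓ : ℝ) (hℓ : 1 ≤ ℓ) :
    gnp n p {ω |
        (SimpleGraph.induce (↑S : Set (Fin n)) (graphOf ω)).Connected ∧
        HasLongPath (SimpleGraph.induce (↑S : Set (Fin n)) (graphOf ω)) ℓ ∧
        ∀ v w : Fin n, v ∈ S → w ∉ S → ¬ (graphOf ω).Adj v w}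
      ≤ ENNReal.ofReal
          (pTree t ℓ * (t : ℝ) ^ (t - 2) * p ^ (t - 1) * (1 - p) ^ (t * (n - t))) := by
  classical
  have hcardV : Fintype.card (↑S : Set (Fin n)) = t := by
    simpa using hS
  have ε := Fintype.equivFinOfCardEq hcardV
  set 𝒜 : Set (SimpleGraph (↑S : Set (Fin n))) := {T | T.IsTree ∧ HasLongPath T ℓ} with h𝒜
  have hfin : 𝒜.Finite := Set.toFinite _
  set 𝒯 : Finset (SimpleGraph (↑S : Set (Fin n))) := hfin.toFinset with h𝒯
  set sm : Sym2 (↑S : Set (Fin n)) → Sym2 (Fin n) := Sym2.map Subtype.val with hsm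
  have hsminj : Function.Injective sm := Sym2.map.injective Subtype.val_injective
  set cross : Finset (Sym2 (Fin n)) :=
    (S ×ˢ Sᶜ).image (fun q : Fin n × Fin n => s(q.1, q.2)) with hcross
  set ES : SimpleGraph (↑S : Set (Fin n)) → Finset (Sym2 (Fin n)) :=
    fun T => T.edgeFinset.image sm with hES
  set A : SimpleGraph (↑S : Set (Fin n)) → Set (Sym2 (Fin n) → Bool) :=
    fun T => {ω | (∀ e ∈ ES T, ω e = true) ∧ (∀ e ∈ cross, ω e = false)} with hA
  -- disjointness
  have hdisj : ∀ T, Disjoint (ES T) cross := by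
    intro T
    rw [Finset.disjoint_left]
    intro e heE heC
    obtain ⟨e₀, he₀, rfl⟩ := Finset.mem_image.mp heE
    obtain ⟨⟨v, w⟩, hvw, heq⟩ := Finset.mem_image.mp heC
    rw [Finset.mem_product] at hvw
    obtain ⟨hv, hw⟩ := hvw
    rw [Finset.mem_compl] at hw
    obtain ⟨⟨x, y⟩, rfl⟩ := e₀.exists_rep
    rw [show sm (Quot.mk _ (x, y)) = s((x : Fin n), (y : Fin n)) from Sym2.map_pair_eq _ _ _,
      Sym2.eq_iff] at heq
    rcases heq with ⟨rfl, rfl⟩ | ⟨rfl, rfl⟩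
    · exact hw y.2
    · exact hw x.2
  -- cardinalities
  have hcross_card : cross.card = t * (n - t) := by
    rw [hcross, Finset.card_image_of_injOn, Finset.card_product, Finset.card_compl,
      Fintype.card_fin, hS]
    intro q hq q' hq' heq
    simp only [Finset.coe_product, Set.mem_prod, Finset.mem_coe, Finset.mem_compl] at hq hq'
    rw [Sym2.eq_iff] at heq
    rcases heq with ⟨h1, h2⟩ | ⟨h1, h2⟩
    · exact Prod.ext h1 h2
    · exact absurd (h1 ▸ hq.1) hq'.2
  have hES_card : ∀ T ∈ 𝒯, (ES T).card = t - 1 := by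
    intro T hT
    rw [h𝒯, Set.Finite.mem_toFinset] at hT
    have htree : T.IsTree := hT.1
    have := htree.card_edgeFinset
    rw [hcardV] at this
    rw [hES]
    simp only
    rw [Finset.card_image_of_injective _ hsminj]
    omega
  -- the union bound inclusion
  have hsub : {ω : Sym2 (Fin n) → Bool |
        (SimpleGraph.induce (↑S : Set (Fin n)) (graphOf ω)).Connected ∧
        HasLongPath (SimpleGraph.induce (↑S : Set (Fin n)) (graphOf ω)) ℓ ∧
        ∀ v w : Fin n, v ∈ S → w ∉ S → ¬ (graphOf ω).Adj v w} ⊆ ⋃ T ∈ 𝒯, A T := by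
    intro ω hω
    obtain ⟨h1, h2, h3⟩ := hω
    set GS := SimpleGraph.induce (↑S : Set (Fin n)) (graphOf ω) with hGS
    obtain ⟨a, b, P, hPp, hPl⟩ := h2
    have hHle : fromEdgeSet {e | e ∈ P.edges} ≤ GS := by
      conv_rhs => rw [← fromEdgeSet_edgeSet GS]
      exact fromEdgeSet_mono (fun e he => P.edges_subset_edgeSet he)
    obtain ⟨T, hHT, hTG, hTree⟩ := exists_spanning_tree_aux GS.edgeSet.ncard GS le_rfl h1 _
      hHle (pathGraph_isAcyclic P hPp)
    have hedges : ∀ e ∈ P.edges, e ∈ T.edgeSet := by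
      intro e he
      apply edgeSet_mono hHT
      rw [edgeSet_fromEdgeSet]
      exact ⟨he, GS.not_isDiag_of_mem_edgeSet (P.edges_subset_edgeSet he)⟩
    have hTmem : T ∈ 𝒯 := by
      rw [h𝒯, Set.Finite.mem_toFinset]
      refine ⟨hTree, a, b, P.transfer T hedges, hPp.transfer hedges, ?_⟩
      rw [Walk.length_transfer]
      exact hPl
    refine Set.mem_biUnion hTmem ?_
    constructor
    · intro e he
      obtain ⟨e₀, he₀, rfl⟩ := Finset.mem_image.mp he
      have he₀' : e₀ ∈ GS.edgeSet := edgeSet_mono hTG (mem_edgeFinset.mp he₀)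
      obtain ⟨⟨x, y⟩, rfl⟩ := e₀.exists_rep
      change s(x, y) ∈ GS.edgeSet at he₀'
      rw [GS.mem_edgeSet] at he₀'
      have hadj : (graphOf ω).Adj (x : Fin n) (y : Fin n) := he₀'
      rw [show sm (Quot.mk _ (x, y)) = s((x : Fin n), (y : Fin n)) from Sym2.map_pair_eq _ _ _]
      exact (show (x : Fin n) ≠ y ∧ ω s((x : Fin n), (y : Fin n)) = true from hadj).2
    · intro e he
      obtain ⟨⟨v, w⟩, hvw, rfl⟩ := Finset.mem_image.mp he
      rw [Finset.mem_product] at hvw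
      obtain ⟨hv, hw⟩ := hvw
      rw [Finset.mem_compl] at hw
      have hne : v ≠ w := fun hvw' => hw (hvw' ▸ hv)
      have hno := h3 v w hv hw
      by_contra hfalse
      refine hno (show v ≠ w ∧ ω s(v, w) = true from ⟨hne, ?_⟩)
      revert hfalse
      cases ω s(v, w) <;> simp
  -- the counting
  have hN : 𝒯.card = Set.ncard {T : SimpleGraph (Fin t) | T.IsTree ∧ HasLongPath T ℓ} := by
    rw [h𝒯, ← Set.ncard_eq_toFinset_card _ hfin, h𝒜]
    exact ncard_trees_eq t ε ℓ
  -- putting it together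
  calc gnp n p _ ≤ gnp n p (⋃ T ∈ 𝒯, A T) := measure_mono hsub
    _ ≤ ∑ T ∈ 𝒯, gnp n p (A T) := measure_biUnion_finset_le 𝒯 A
    _ = ∑ T ∈ 𝒯, ENNReal.ofReal p ^ (t - 1) * ENNReal.ofReal (1 - p) ^ (t * (n - t)) := by
        refine Finset.sum_congr rfl (fun T hT => ?_)
        rw [hA]
        simp only
        rw [gnp_cylinder n p hp0 hp1 (ES T) cross (hdisj T), hES_card T hT, hcross_card]
    _ = ENNReal.ofReal
          (pTree t ℓ * (t : ℝ) ^ (t - 2) * p ^ (t - 1) * (1 - p) ^ (t * (n - t))) := by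
        rw [Finset.sum_const, nsmul_eq_mul, hN]
        have hpt : pTree t ℓ * (t : ℝ) ^ (t - 2) =
            (Set.ncard {T : SimpleGraph (Fin t) | T.IsTree ∧ HasLongPath T ℓ} : ℝ) := by
          rw [pTree]
          by_cases ht : t = 0
          · subst ht; norm_num
          · exact div_mul_cancel₀ _ (pow_ne_zero _ (Nat.cast_ne_zero.mpr ht))
        rw [hpt, ENNReal.ofReal_mul (by positivity), ENNReal.ofReal_mul (by positivity),
          ENNReal.ofReal_pow hp0, ENNReal.ofReal_pow (by linarith), ENNReal.ofReal_natCast,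
          mul_assoc]
end

section
/- Let G be a connected graph, let K be the 2-core of G, and let F be the graph obtained from G by removing the edges of K. Then for every ℓ ≥ 1, the maximum number of vertices covered by pairwise vertex-disjoint paths of length at least ℓ in G is at most 6·|V(K)| + 6·Z, where Z is the maximum number of vertices covered by pairwise vertex-disjoint paths of length at least ℓ/3 in F. -/
/-- The subgraph of `G` induced by a vertex set `s` (as a graph on the same vertex type). -/
def inducedOn {V : Type*} (G : SimpleGraph V) (s : Set V) : SimpleGraph V where
  Adj x y := G.Adj x y ∧ x ∈ s ∧ y ∈ s
  symm := ⟨fun _ _ ⟨h, hx, hy⟩ => ⟨h.symm, hy, hx⟩⟩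
  loopless := ⟨fun x ⟨h, _, _⟩ => G.loopless.irrefl x h⟩

/-- The vertex set of the 2-core of `G`: the union of all vertex sets `S` such that every
vertex of `S` has at least two neighbours inside `S`.  -/
def twoCoreSet {V : Type*} (G : SimpleGraph V) : Set V :=
  ⋃₀ {S : Set V | ∀ v ∈ S, 2 ≤ (S ∩ G.neighborSet v).ncard}

/-- The graph obtained from `G` by removing all edges with both endpoints in `K`
(when `K` is the vertex set of the 2-core, these are exactly the edges of the 2-core). -/
def removeCoreEdges {V : Type*} (G : SimpleGraph V) (K : Set V) : SimpleGraph V where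
  Adj x y := G.Adj x y ∧ ¬(x ∈ K ∧ y ∈ K)
  symm := ⟨fun _ _ ⟨h, hk⟩ => ⟨h.symm, fun ⟨hy, hx⟩ => hk ⟨hx, hy⟩⟩⟩
  loopless := ⟨fun x ⟨h, _⟩ => G.loopless.irrefl x h⟩



open List

section Aux

variable {V : Type*}

/-- The 2-core set itself satisfies the defining property. -/
lemma twoCore_nbrs [Fintype V] (G : SimpleGraph V) {v : V} (hv : v ∈ twoCoreSet G) :
    2 ≤ (twoCoreSet G ∩ G.neighborSet v).ncard := by
  obtain ⟨S, hS, hvS⟩ := hv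
  refine le_trans (hS v hvS) (Set.ncard_le_ncard ?_ (Set.toFinite _))
  exact Set.inter_subset_inter_left _ (fun x hx => Set.mem_sUnion.mpr ⟨S, hS, hx⟩)

/-- In a nodup chain, every element is the head, the last, or has two distinct
neighbours in the list. -/
lemma two_nbrs_of_chain (G : SimpleGraph V) :
    ∀ (l : List V) (a : V), List.Chain' G.Adj (a :: l) → (a :: l).Nodup →
    ∀ x ∈ a :: l, x = a ∨ x = (a :: l).getLast (List.cons_ne_nil a l) ∨
      ∃ y z, y ∈ a :: l ∧ z ∈ a :: l ∧ y ≠ z ∧ G.Adj x y ∧ G.Adj x z := by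
  intro l
  induction l with
  | nil => intro a _ _ x hx; left; simpa using hx
  | cons b t ih =>
    intro a hc hn x hx
    rcases List.mem_cons.mp hx with rfl | hx'
    · left; rfl
    · have hab : G.Adj a b := (List.isChain_cons_cons.mp hc).1
      have hc' : List.Chain' G.Adj (b :: t) := (List.isChain_cons_cons.mp hc).2
      have hn' : (b :: t).Nodup := hn.of_cons
      have hglast : (a :: b :: t).getLast (List.cons_ne_nil _ _)
          = (b :: t).getLast (List.cons_ne_nil _ _) := List.getLast_cons _
      rcases ih b hc' hn' x hx' with hxb | h | ⟨y, z, hy, hz, hyz, h1, h2⟩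
      · cases t with
        | nil =>
          right; left; rw [hglast, hxb]; simp
        | cons c t' =>
          right; right
          refine ⟨a, c, by simp, by simp, ?_, hxb ▸ hab.symm,
            hxb ▸ (List.isChain_cons_cons.mp hc').1⟩
          intro hac
          have : a ∉ b :: c :: t' := (List.nodup_cons.mp hn).1
          exact this (by rw [hac]; simp)
      · right; left; rw [hglast]; exact h
      · exact Or.inr (Or.inr ⟨y, z, List.mem_cons_of_mem _ hy, List.mem_cons_of_mem _ hz,
          hyz, h1, h2⟩)

/-- A nodup chain (path) in `G` between two vertices of the 2-core lies entirely
in the 2-core. -/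
lemma chain_core [Fintype V] (G : SimpleGraph V) (l : List V) (hne : l ≠ [])
    (hc : List.Chain' G.Adj l) (hn : l.Nodup)
    (hh : l.head hne ∈ twoCoreSet G) (hl : l.getLast hne ∈ twoCoreSet G) :
    ∀ x ∈ l, x ∈ twoCoreSet G := by
  intro x hx
  set S : Set V := twoCoreSet G ∪ {y | y ∈ l} with hSdef
  have hcore : ∀ w ∈ twoCoreSet G, 2 ≤ (S ∩ G.neighborSet w).ncard := by
    intro w hw
    refine le_trans (twoCore_nbrs G hw) (Set.ncard_le_ncard ?_ (Set.toFinite _))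
    exact Set.inter_subset_inter_left _ Set.subset_union_left
  have hSmem : S ∈ {S : Set V | ∀ v ∈ S, 2 ≤ (S ∩ G.neighborSet v).ncard} := by
    intro v hv
    rcases hv with hv | hv
    · exact hcore v hv
    · obtain ⟨a, t, rfl⟩ : ∃ a t, l = a :: t := by
        cases l with
        | nil => exact absurd rfl hne
        | cons a t => exact ⟨a, t, rfl⟩
      rcases two_nbrs_of_chain G t a hc hn v hv with rfl | hvl | ⟨y, z, hy, hz, hyz, h1, h2⟩
      · exact hcore v (by simpa using hh)
      · exact hcore v (by rw [hvl]; exact hl)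
      · have hsub : ({y, z} : Set V) ⊆ S ∩ G.neighborSet v := by
          intro u hu
          rcases hu with rfl | rfl
          · exact ⟨Or.inr hy, h1⟩
          · exact ⟨Or.inr hz, h2⟩
        calc 2 = ({y, z} : Set V).ncard := (Set.ncard_pair hyz).symm
        _ ≤ _ := Set.ncard_le_ncard hsub (Set.toFinite _)
  exact Set.mem_sUnion.mpr ⟨S, hSmem, Or.inr hx⟩

/-- Transfer a chain along an implication valid on the members of the list. -/
lemma chain'_of_forall {α : Type*} {R S : α → α → Prop} {P : α → Prop}
    (h : ∀ x y, R x y → P x → P y → S x y) :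
    ∀ l : List α, List.Chain' R l → (∀ x ∈ l, P x) → List.Chain' S l := by
  intro l
  induction l with
  | nil => intro _ _; exact List.IsChain.nil
  | cons a t ih =>
    intro hc hP
    cases t with
    | nil => exact List.IsChain.singleton _
    | cons b t' =>
      rw [List.Chain', List.isChain_cons_cons] at hc ⊢
      exact ⟨h _ _ hc.1 (hP a (by simp)) (hP b (by simp)),
        ih hc.2 (fun x hx => hP x (List.mem_cons_of_mem _ hx))⟩

/-- Any nonempty chain can be realised as a walk with that support. -/
lemma exists_walk_of_chain (H : SimpleGraph V) :
    ∀ (l : List V), List.Chain' H.Adj l → l ≠ [] →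
      ∃ (a b : V) (w : H.Walk a b), w.support = l := by
  intro l
  induction l with
  | nil => intro _ h; exact absurd rfl h
  | cons a t ih =>
    intro hc _
    cases t with
    | nil => exact ⟨a, a, SimpleGraph.Walk.nil, by simp⟩
    | cons b t' =>
      obtain ⟨a', b', w, hw⟩ := ih (List.isChain_cons_cons.mp hc).2 (by simp)
      have ha' : a' = b := by
        have h2 := w.support_eq_cons
        rw [hw] at h2
        exact (List.cons_eq_cons.mp h2.symm).1
      subst ha'
      exact ⟨a, b', SimpleGraph.Walk.cons (List.isChain_cons_cons.mp hc).1 w, by simp [hw]⟩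

end Aux

/-- If a nodup chain decomposes as `p ++ b ++ q` where `b` is a nonempty block of
core vertices and the head of `q` is not a core vertex, then no vertex of `q` is a
core vertex. -/
lemma suf_not_core {V : Type*} [Fintype V] (G : SimpleGraph V) (l p bl q : List V)
    (hsplit : l = p ++ bl ++ q) (hc : List.Chain' G.Adj l) (hn : l.Nodup)
    (hbne : bl ≠ []) (hbK : ∀ v ∈ bl, v ∈ twoCoreSet G)
    (hqhead : ∀ y t, q = y :: t → y ∉ twoCoreSet G) :
    ∀ x ∈ q, x ∉ twoCoreSet G := by
  classical
  intro x hx hxK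
  set tw := q.takeWhile (fun v => decide (v ≠ x)) with htw
  set dq := q.dropWhile (fun v => decide (v ≠ x)) with hdq
  have hdqne : dq ≠ [] := by
    intro h
    have := List.dropWhile_eq_nil_iff.mp (hdq ▸ h) x hx
    simp at this
  have hhead : dq.head hdqne = x := by
    have := List.head_dropWhile_not (fun v => decide (v ≠ x)) (l := q) (hdq ▸ hdqne)
    simpa [hdq] using this
  have hqeq : q = tw ++ ([x] ++ dq.tail) := by
    conv_lhs => rw [← List.takeWhile_append_dropWhile (p := fun v => decide (v ≠ x)) (l := q)]
    rw [← htw, ← hdq]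
    congr 1
    rw [← hhead]
    exact (List.cons_head_tail hdqne).symm
  obtain ⟨b0, b', rfl⟩ : ∃ b0 b', bl = b0 :: b' := by
    cases bl with
    | nil => exact absurd rfl hbne
    | cons b0 b' => exact ⟨b0, b', rfl⟩
  set L0 : List V := (b0 :: b') ++ (tw ++ [x]) with hL0
  have hL0ne : L0 ≠ [] := by simp [hL0]
  have hinfix : L0 <:+: l := by
    refine ⟨p, dq.tail, ?_⟩
    rw [hsplit, hqeq, hL0]
    simp [List.append_assoc]
  have hcL : List.Chain' G.Adj L0 := hc.infix hinfix
  have hnL : L0.Nodup := hn.sublist hinfix.sublist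
  have hheadL : L0.head hL0ne ∈ twoCoreSet G := by
    have : L0.head hL0ne = b0 := rfl
    rw [this]; exact hbK b0 (by simp)
  have hlastL : L0.getLast hL0ne ∈ twoCoreSet G := by
    have h1 : L0.getLast hL0ne = x := by
      have h2 : L0 = ((b0 :: b') ++ tw) ++ [x] := by simp [hL0]
      rw [List.getLast_congr _ (by simp) h2, List.getLast_concat]
    rw [h1]; exact hxK
  have hall : ∀ y ∈ L0, y ∈ twoCoreSet G := chain_core G L0 hL0ne hcL hnL hheadL hlastL
  cases htwc : tw with
  | nil =>
    have hq' : q = x :: dq.tail := by rw [hqeq, htwc]; simp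
    exact hqhead x dq.tail hq' hxK
  | cons c tw' =>
    have hq' : q = c :: (tw' ++ [x] ++ dq.tail) := by
      rw [hqeq, htwc]; simp
    have hcmem : c ∈ L0 := by rw [hL0, htwc]; simp
    exact hqhead c _ hq' (hall c hcmem)

lemma dropWhile_head_prop {α : Type*} (p : α → Bool) :
    ∀ l : List α, ∀ c r, l.dropWhile p = c :: r → p c = false := by
  intro l
  induction l with
  | nil => simp [List.dropWhile]
  | cons a t ih =>
    intro c r h
    rw [List.dropWhile_cons] at h
    split at h
    · exact ih _ _ h
    · next hp =>
      obtain ⟨rfl, -⟩ := List.cons_eq_cons.mp h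
      simpa using hp

/-- Decomposition of a nodup chain in `G` into a core-free prefix, a core block and a
core-free suffix. -/
lemma decomp {V : Type*} [Fintype V] (G : SimpleGraph V) (l : List V)
    (hc : List.Chain' G.Adj l) (hn : l.Nodup) :
    ∃ p bl q : List V,
      l = p ++ bl ++ q ∧
      (∀ v ∈ bl, v ∈ twoCoreSet G) ∧
      (∀ v ∈ p, v ∉ twoCoreSet G) ∧
      (∀ v ∈ q, v ∉ twoCoreSet G) ∧
      (bl = [] → q = []) := by
  classical
  set pr : V → Bool := fun v => decide (v ∈ twoCoreSet G) with hpr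
  set rest : List V := l.dropWhile (fun v => !pr v) with hrest
  set p0 : List V := l.takeWhile (fun v => !pr v) with hp0
  set bl0 : List V := rest.takeWhile pr with hbl0
  set q0 : List V := rest.dropWhile pr with hq0
  have hsplit : l = p0 ++ bl0 ++ q0 := by
    rw [List.append_assoc, hbl0, hq0, List.takeWhile_append_dropWhile, hp0, hrest,
      List.takeWhile_append_dropWhile]
  have hblK : ∀ v ∈ bl0, v ∈ twoCoreSet G := by
    intro v hv
    have := List.mem_takeWhile_imp hv
    simpa [hpr] using this
  have hpK : ∀ v ∈ p0, v ∉ twoCoreSet G := by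
    intro v hv
    have := List.mem_takeWhile_imp hv
    simpa [hpr] using this
  have hbq : bl0 = [] → q0 = [] := by
    intro h
    cases hrw : rest with
    | nil => rw [hq0, hrw]; rfl
    | cons c r' =>
      exfalso
      have hcK : pr c = true := by
        have := dropWhile_head_prop (fun v => !pr v) l c r' (by rw [← hrest, hrw])
        simpa using this
      have : bl0 = c :: r'.takeWhile pr := by
        rw [hbl0, hrw, List.takeWhile_cons_of_pos hcK]
      rw [h] at this
      exact List.cons_ne_nil _ _ this.symm
  have hqK : ∀ v ∈ q0, v ∉ twoCoreSet G := by
    by_cases hbl : bl0 = []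
    · rw [hbq hbl]; simp
    · refine suf_not_core G l p0 bl0 q0 hsplit hc hn hbl hblK ?_
      intro y t hyt
      have := dropWhile_head_prop pr rest y t (by rw [← hq0, hyt])
      simpa [hpr] using this
  exact ⟨p0, bl0, q0, hsplit, hblK, hpK, hqK, hbq⟩

/-- **Lemma (paths versus the 2-core).** Let `G` be a connected (finite) graph, `K` its
2-core and `F` the graph obtained from `G` by removing the edges of `K`.  For every
`ℓ ≥ 1`, if a collection of pairwise vertex-disjoint paths of length at least `ℓ` covers
`m` vertices of `G`, then `m ≤ 6|V(K)| + 6Z`, where `Z` is realised by a collection of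
pairwise vertex-disjoint paths of length at least `ℓ/3` in `F`. -/
theorem paths_bounded_by_core_and_forest {V : Type*} [Fintype V] (G : SimpleGraph V)
    (hG : G.Connected) (ℓ : ℕ) (hℓ : 1 ≤ ℓ) (m : ℕ)
    (hm : DisjointPathsCover G (ℓ : ℝ) (m : ℝ)) :
    ∃ z : ℕ,
      DisjointPathsCover (removeCoreEdges G (twoCoreSet G)) ((ℓ : ℝ) / 3) (z : ℝ) ∧
      (m : ℝ) ≤ 6 * ((twoCoreSet G).ncard : ℝ) + 6 * (z : ℝ) := by
  classical
  obtain ⟨k, a, b, P, hpath, hlen, hdisj, hsum⟩ := hm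
  choose p bl q hsplit hblK hpK hqK hbl0 using
    (fun i : Fin k => decomp G (P i).support ((P i).isChain_adj_support)
      (hpath i).support_nodup)
  set F : SimpleGraph V := removeCoreEdges G (twoCoreSet G) with hF
  -- subset facts
  have hpsub : ∀ i, ∀ v ∈ p i, v ∈ (P i).support := by
    intro i v hv; rw [hsplit i]; simp [hv]
  have hqsub : ∀ i, ∀ v ∈ q i, v ∈ (P i).support := by
    intro i v hv; rw [hsplit i]; simp [hv]
  have hblsub : ∀ i, ∀ v ∈ bl i, v ∈ (P i).support := by
    intro i v hv; rw [hsplit i]; simp [hv]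
  -- chain facts for the pieces, in F
  have hFadj : ∀ x y : V, G.Adj x y → x ∉ twoCoreSet G → y ∉ twoCoreSet G → F.Adj x y :=
    fun x y hxy hx _ => (show G.Adj x y ∧ ¬(x ∈ twoCoreSet G ∧ y ∈ twoCoreSet G) from ⟨hxy, fun h => hx h.1⟩)
  have hpchain : ∀ i, (p i).Chain' F.Adj := by
    intro i
    refine chain'_of_forall hFadj (p i) ?_ (hpK i)
    exact ((P i).isChain_adj_support).prefix ⟨bl i ++ q i,
      (List.append_assoc _ _ _).symm.trans (hsplit i).symm⟩
  have hqchain : ∀ i, (q i).Chain' F.Adj := by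
    intro i
    refine chain'_of_forall hFadj (q i) ?_ (hqK i)
    exact ((P i).isChain_adj_support).suffix ⟨p i ++ bl i, (hsplit i).symm⟩
  -- nodup facts
  have hpnodup : ∀ i, (p i).Nodup := by
    intro i
    have hn := (hpath i).support_nodup
    rw [hsplit i, List.nodup_append] at hn
    exact (List.nodup_append.mp hn.1).1
  have hqnodup : ∀ i, (q i).Nodup := by
    intro i
    have hn := (hpath i).support_nodup
    rw [hsplit i, List.nodup_append] at hn
    exact hn.2.1
  have hblnodup : ∀ i, (bl i).Nodup := by
    intro i
    have hn := (hpath i).support_nodup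
    rw [hsplit i, List.nodup_append] at hn
    exact (List.nodup_append.mp hn.1).2.1
  have hpq_disj : ∀ i, ∀ v ∈ p i, v ∉ q i := by
    intro i
    have hn := (hpath i).support_nodup
    rw [hsplit i, List.nodup_append] at hn
    intro v hv hv'
    exact hn.2.2 v (List.mem_append_left _ hv) v hv' rfl
  -- pieces
  set piece : Fin k × Bool → List V := fun x => if x.2 then p x.1 else q x.1 with hpiece
  set kept : Fin k × Bool → Prop := fun x => ℓ + 3 ≤ 3 * (piece x).length with hkept
  have hpiece_sub : ∀ x : Fin k × Bool, ∀ v ∈ piece x, v ∈ (P x.1).support := by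
    rintro ⟨i, bb⟩ v hv
    cases bb
    · exact hqsub i v (by simpa [hpiece] using hv)
    · exact hpsub i v (by simpa [hpiece] using hv)
  have hpiece_nodup : ∀ x : Fin k × Bool, (piece x).Nodup := by
    rintro ⟨i, bb⟩; cases bb
    · simpa [hpiece] using hqnodup i
    · simpa [hpiece] using hpnodup i
  have hpiece_chain : ∀ x : Fin k × Bool, (piece x).Chain' F.Adj := by
    rintro ⟨i, bb⟩; cases bb
    · simpa [hpiece] using hqchain i
    · simpa [hpiece] using hpchain i
  have hpiece_disj : ∀ x y : Fin k × Bool, x ≠ y → ∀ v ∈ piece x, v ∉ piece y := by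
    rintro ⟨i, bx⟩ ⟨j, byy⟩ hxy v hv hv'
    by_cases hij : i = j
    · subst hij
      cases bx <;> cases byy
      · exact hxy rfl
      · exact hpq_disj i v (by simpa [hpiece] using hv') (by simpa [hpiece] using hv)
      · exact hpq_disj i v (by simpa [hpiece] using hv) (by simpa [hpiece] using hv')
      · exact hxy rfl
    · exact hdisj i j hij v (hpiece_sub _ v hv) (hpiece_sub _ v hv')
  -- the kept pieces give walks in F
  have hex : ∀ x : {x : Fin k × Bool // kept x},
      ∃ (u w : V) (wk : F.Walk u w), wk.support = piece x.val := by
    intro x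
    refine exists_walk_of_chain F (piece x.val) (hpiece_chain x.val) ?_
    have hk : ℓ + 3 ≤ 3 * (piece x.val).length := x.prop
    have : 0 < (piece x.val).length := by omega
    exact List.ne_nil_of_length_pos this
  choose A B W hW using hex
  set n := Fintype.card {x : Fin k × Bool // kept x} with hn
  set e : Fin n ≃ {x : Fin k × Bool // kept x} := (Fintype.equivFin _).symm with he
  set z : ℕ := ∑ x : {x : Fin k × Bool // kept x}, (piece x.val).length with hz
  refine ⟨z, ?_, ?_⟩
  · -- the cover in F
    unfold DisjointPathsCover
    refine ⟨n, fun j => A (e j), fun j => B (e j), fun j => W (e j), ?_, ?_, ?_, ?_⟩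
    · intro j
      rw [SimpleGraph.Walk.isPath_def, hW]
      exact hpiece_nodup _
    · intro j
      have hk : ℓ + 3 ≤ 3 * (piece (e j).val).length := (e j).prop
      have hsup : (W (e j)).support.length = (piece (e j).val).length := by rw [hW]
      have hls := (W (e j)).length_support
      have hlen3 : ℓ ≤ 3 * (W (e j)).length := by omega
      rw [div_le_iff₀ (by norm_num : (0:ℝ) < 3)]
      have : (ℓ : ℝ) ≤ 3 * ((W (e j)).length : ℝ) := by exact_mod_cast hlen3
      linarith
    · intro j j' hjj' x hx hx'
      have hne : (e j).val ≠ (e j').val := by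
        intro hval
        exact hjj' (e.injective (Subtype.ext hval))
      rw [hW] at hx hx'
      exact hpiece_disj _ _ hne x hx hx'
    · have hcast : (z : ℝ) = ∑ x : {x : Fin k × Bool // kept x},
          ((piece x.val).length : ℝ) := by
        rw [hz]; push_cast; rfl
      rw [hcast, ← e.sum_comp (fun x => ((piece x.val).length : ℝ))]
      refine le_of_eq (Finset.sum_congr rfl fun j _ => ?_)
      rw [hW]
  · -- the counting estimate
    -- z as a sum over i of the kept contributions
    have hzz : z = ∑ i : Fin k, ((if kept (i, true) then (p i).length else 0)
        + (if kept (i, false) then (q i).length else 0)) := by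
      rw [hz, ← Finset.sum_subtype (Finset.univ.filter kept) (fun x => by simp)
        (fun x => (piece x).length), Finset.sum_filter, Fintype.sum_prod_type]
      refine Finset.sum_congr rfl fun i _ => ?_
      rw [Fintype.sum_bool]
      simp only [hpiece, if_true, Bool.false_eq_true, if_false]
      have k1 : (ℓ + 3 ≤ 3 * (p i).length) ↔ kept (i, true) := by simp [hkept, hpiece]
      have k2 : (ℓ + 3 ≤ 3 * (q i).length) ↔ kept (i, false) := by simp [hkept, hpiece]
      rw [if_congr k1 rfl rfl, if_congr k2 rfl rfl]
    -- the per-path inequality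
    have hper : ∀ i : Fin k, (P i).support.length ≤ 6 * (bl i).length
        + 6 * ((if kept (i, true) then (p i).length else 0)
          + (if kept (i, false) then (q i).length else 0)) := by
      intro i
      have htot : (P i).support.length = (p i).length + (bl i).length + (q i).length := by
        rw [hsplit i]; simp; omega
      have hl1 : ℓ + 1 ≤ (P i).support.length := by
        have h1 : ℓ ≤ (P i).length := by exact_mod_cast hlen i
        have h2 := (P i).length_support
        omega
      have hq0 : (bl i).length = 0 → (q i).length = 0 := by
        intro h
        rw [hbl0 i (List.length_eq_zero_iff.mp h)]; rfl
      have e1 : (if kept (i, true) then (p i).length else 0)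
          = if ℓ + 3 ≤ 3 * (p i).length then (p i).length else 0 := by
        refine if_congr ?_ rfl rfl
        simp [hkept, hpiece]
      have e2 : (if kept (i, false) then (q i).length else 0)
          = if ℓ + 3 ≤ 3 * (q i).length then (q i).length else 0 := by
        refine if_congr ?_ rfl rfl
        simp [hkept, hpiece]
      rw [e1, e2]
      rcases eq_or_ne (bl i).length 0 with hb0 | hb0
      · have := hq0 hb0; split_ifs <;> omega
      · split_ifs <;> omega
    -- the core vertices on the paths are at most |K|
    have hblS : ∑ i : Fin k, (bl i).length ≤ (twoCoreSet G).ncard := by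
      have hdisjbl : ∀ i ∈ Finset.univ, ∀ j ∈ Finset.univ, i ≠ j →
          Disjoint ((bl i).toFinset) ((bl j).toFinset) := by
        intro i _ j _ hij
        rw [Finset.disjoint_left]
        intro v hv hv'
        exact hdisj i j hij v (hblsub i v (List.mem_toFinset.mp hv))
          (hblsub j v (List.mem_toFinset.mp hv'))
      calc ∑ i : Fin k, (bl i).length
          = ∑ i : Fin k, ((bl i).toFinset).card := by
            refine Finset.sum_congr rfl fun i _ => ?_
            rw [List.toFinset_card_of_nodup (hblnodup i)]
        _ = (Finset.univ.biUnion (fun i => (bl i).toFinset)).card :=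
            (Finset.card_biUnion hdisjbl).symm
        _ ≤ (twoCoreSet G).toFinset.card := by
            refine Finset.card_le_card ?_
            intro v hv
            rw [Finset.mem_biUnion] at hv
            obtain ⟨i, -, hv⟩ := hv
            rw [Set.mem_toFinset]
            exact hblK i v (List.mem_toFinset.mp hv)
        _ = (twoCoreSet G).ncard := (Set.ncard_eq_toFinset_card' _).symm
    have hsum_nat : ∑ i : Fin k, (P i).support.length
        ≤ 6 * (twoCoreSet G).ncard + 6 * z := by
      calc ∑ i : Fin k, (P i).support.length
          ≤ ∑ i : Fin k, (6 * (bl i).length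
            + 6 * ((if kept (i, true) then (p i).length else 0)
              + (if kept (i, false) then (q i).length else 0))) :=
            Finset.sum_le_sum fun i _ => hper i
        _ = 6 * (∑ i : Fin k, (bl i).length) + 6 * z := by
            rw [hzz, Finset.sum_add_distrib, ← Finset.mul_sum, ← Finset.mul_sum]
        _ ≤ 6 * (twoCoreSet G).ncard + 6 * z := by
            have := Nat.mul_le_mul_left 6 hblS
            omega
    calc (m : ℝ) ≤ ∑ i : Fin k, ((P i).support.length : ℝ) := hsum
      _ = ((∑ i : Fin k, (P i).support.length : ℕ) : ℝ) := by push_cast; rfl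
      _ ≤ ((6 * (twoCoreSet G).ncard + 6 * z : ℕ) : ℝ) := by exact_mod_cast hsum_nat
      _ = 6 * ((twoCoreSet G).ncard : ℝ) + 6 * (z : ℝ) := by push_cast; ring
end
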